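/- arXiv:0802.3584 — 6 statements merged into one kernel-verified Lean document; each statement's English description precedes it below -/
import Mathlib

section
/- Let s > n/2. There is a constant C = C(s,n) such that for all h ∈ (0,1] and all nonnegative functions ũ, ṽ, w ∈ L²(ℝⁿ): ∫ ⟨hξ⟩^s w(ξ) ((⟨h·⟩^{-s} ũ) * (⟨h·⟩^{-s} ṽ))(ξ) dξ ≤ C h^{-n/2} ‖ũ‖_{L²} ‖ṽ‖_{L²} ‖w‖_{L²}, where * denotes convolution. -/
open MeasureTheory
open scoped ENNReal

namespace Stmt2Aux

/-- Cauchy-Schwarz for lintegrals. -/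
lemma lintegral_CS {α : Type*} [MeasurableSpace α] (μ : Measure α) {f g : α → ℝ≥0∞}
    (hf : Measurable f) (hg : Measurable g) :
    ∫⁻ x, f x * g x ∂μ ≤
      (∫⁻ x, f x ^ (2:ℝ) ∂μ) ^ (1/2:ℝ) * (∫⁻ x, g x ^ (2:ℝ) ∂μ) ^ (1/2:ℝ) := by
  have h22 : (2:ℝ).HolderConjugate 2 := Real.HolderConjugate.two_two
  simpa using ENNReal.lintegral_mul_le_Lp_mul_Lq μ h22 hf.aemeasurable hg.aemeasurable

variable {n : ℕ}

lemma shiftCS {f g : EuclideanSpace ℝ (Fin n) → ℝ≥0∞}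
    (hf : Measurable f) (hg : Measurable g) (y : EuclideanSpace ℝ (Fin n)) :
    ∫⁻ x, f x * g (x - y) ≤
      (∫⁻ x, f x ^ (2:ℝ)) ^ (1/2:ℝ) * (∫⁻ x, g x ^ (2:ℝ)) ^ (1/2:ℝ) := by
  calc ∫⁻ x, f x * g (x - y)
      ≤ (∫⁻ x, f x ^ (2:ℝ)) ^ (1/2:ℝ) * (∫⁻ x, g (x - y) ^ (2:ℝ)) ^ (1/2:ℝ) :=
        lintegral_CS _ hf (hg.comp (measurable_id.sub_const y))
    _ = (∫⁻ x, f x ^ (2:ℝ)) ^ (1/2:ℝ) * (∫⁻ x, g x ^ (2:ℝ)) ^ (1/2:ℝ) := by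
        rw [lintegral_sub_right_eq_self (fun x => g x ^ (2:ℝ)) y]

lemma Jlemma {φ f g : EuclideanSpace ℝ (Fin n) → ℝ≥0∞}
    (hφ : Measurable φ) (hf : Measurable f) (hg : Measurable g) :
    ∫⁻ ξ, ∫⁻ y, φ y * (f ξ * g (ξ - y)) ≤
      (∫⁻ y, φ y) * ((∫⁻ x, f x ^ (2:ℝ)) ^ (1/2:ℝ) * (∫⁻ x, g x ^ (2:ℝ)) ^ (1/2:ℝ)) := by
  have hmeas : AEMeasurable (Function.uncurry fun ξ y => φ y * (f ξ * g (ξ - y)))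
      ((volume : Measure (EuclideanSpace ℝ (Fin n))).prod volume) :=
    ((hφ.comp measurable_snd).mul ((hf.comp measurable_fst).mul
      (hg.comp (measurable_fst.sub measurable_snd)))).aemeasurable
  rw [lintegral_lintegral_swap hmeas]
  calc ∫⁻ y, ∫⁻ ξ, φ y * (f ξ * g (ξ - y))
      = ∫⁻ y, φ y * ∫⁻ ξ, f ξ * g (ξ - y) := by
        refine lintegral_congr fun y => ?_
        exact lintegral_const_mul _ (hf.mul (hg.comp (measurable_id.sub_const y)))
    _ ≤ ∫⁻ y, φ y * ((∫⁻ x, f x ^ (2:ℝ)) ^ (1/2:ℝ) * (∫⁻ x, g x ^ (2:ℝ)) ^ (1/2:ℝ)) :=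
        lintegral_mono fun y => mul_le_mul_right (shiftCS hf hg y) _
    _ = _ := lintegral_mul_const _ hφ

/-- The key pointwise (Peetre-type) inequality. -/
lemma real_key {s : ℝ} (hs : 0 ≤ s) {a b c : ℝ} (ha : 1 ≤ a) (hb : 1 ≤ b)
    (hc0 : 0 ≤ c) (hc : c ≤ 2 * (a + b)) :
    c ^ (s/2) * (a ^ (-s/2) * b ^ (-s/2)) ≤ 2 ^ s * (b ^ (-s/2) + a ^ (-s/2)) := by
  have ha0 : (0:ℝ) < a := lt_of_lt_of_le one_pos ha
  have hb0 : (0:ℝ) < b := lt_of_lt_of_le one_pos hb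
  have hs2 : 0 ≤ s/2 := by linarith
  have h4 : (4:ℝ) ^ (s/2) = 2 ^ s := by
    have : (4:ℝ) = (2:ℝ) ^ (2:ℝ) := by
      rw [show ((2:ℝ):ℝ) = ((2:ℕ):ℝ) by norm_num, Real.rpow_natCast]; norm_num
    rw [this, ← Real.rpow_mul (by norm_num), show (2:ℝ)*(s/2) = s by ring]
  have hmax : max a b ^ (s/2) ≤ a ^ (s/2) + b ^ (s/2) := by
    rcases max_cases a b with ⟨h1, _⟩ | ⟨h1, _⟩ <;> rw [h1]
    · nlinarith [Real.rpow_nonneg hb0.le (s/2)]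
    · nlinarith [Real.rpow_nonneg ha0.le (s/2)]
  have h1 : c ^ (s/2) ≤ 2 ^ s * (a ^ (s/2) + b ^ (s/2)) := by
    calc c ^ (s/2) ≤ (4 * max a b) ^ (s/2) := by
          apply Real.rpow_le_rpow hc0 _ hs2
          have := le_max_left a b; have := le_max_right a b
          nlinarith
      _ = 4 ^ (s/2) * max a b ^ (s/2) := Real.mul_rpow (by norm_num) (by positivity)
      _ = 2 ^ s * max a b ^ (s/2) := by rw [h4]
      _ ≤ 2 ^ s * (a ^ (s/2) + b ^ (s/2)) := by
          apply mul_le_mul_of_nonneg_left hmax (by positivity)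
  have hprod : (a ^ (s/2) + b ^ (s/2)) * (a ^ (-s/2) * b ^ (-s/2))
      = b ^ (-s/2) + a ^ (-s/2) := by
    have haa : a ^ (s/2) * a ^ (-s/2) = 1 := by
      rw [← Real.rpow_add ha0, show s/2 + -s/2 = 0 by ring, Real.rpow_zero]
    have hbb : b ^ (s/2) * b ^ (-s/2) = 1 := by
      rw [← Real.rpow_add hb0, show s/2 + -s/2 = 0 by ring, Real.rpow_zero]
    calc (a ^ (s/2) + b ^ (s/2)) * (a ^ (-s/2) * b ^ (-s/2))
        = (a ^ (s/2) * a ^ (-s/2)) * b ^ (-s/2)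
          + (b ^ (s/2) * b ^ (-s/2)) * a ^ (-s/2) := by ring
      _ = b ^ (-s/2) + a ^ (-s/2) := by rw [haa, hbb]; ring
  calc c ^ (s/2) * (a ^ (-s/2) * b ^ (-s/2))
      ≤ (2 ^ s * (a ^ (s/2) + b ^ (s/2))) * (a ^ (-s/2) * b ^ (-s/2)) := by
        apply mul_le_mul_of_nonneg_right h1 (by positivity)
    _ = 2 ^ s * ((a ^ (s/2) + b ^ (s/2)) * (a ^ (-s/2) * b ^ (-s/2))) := by ring
    _ = 2 ^ s * (b ^ (-s/2) + a ^ (-s/2)) := by rw [hprod]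


lemma meas_jap {n : ℕ} (h e : ℝ) :
    Measurable fun x : EuclideanSpace ℝ (Fin n) => (1 + h^2*‖x‖^2) ^ e := by
  have hc : Continuous fun x : EuclideanSpace ℝ (Fin n) => (1 + h^2*‖x‖^2 : ℝ) := by fun_prop
  exact (hc.rpow_const fun x => Or.inl (by positivity)).measurable

end Stmt2Aux

open Stmt2Aux

/-- the key convolution estimate -/
theorem stmt2 (n : ℕ) (s : ℝ) (hs : (n : ℝ) / 2 < s) :
    ∃ C : ℝ, 0 < C ∧ ∀ h : ℝ, h ∈ Set.Ioc (0 : ℝ) 1 →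
      ∀ u v w : EuclideanSpace ℝ (Fin n) → ℝ,
        Measurable u → Measurable v → Measurable w →
        (∀ x, 0 ≤ u x) → (∀ x, 0 ≤ v x) → (∀ x, 0 ≤ w x) →
        MemLp u 2 volume → MemLp v 2 volume → MemLp w 2 volume →
        (∫⁻ ξ, ENNReal.ofReal ((1 + h ^ 2 * ‖ξ‖ ^ 2) ^ (s / 2) * w ξ) *
            ∫⁻ y, ENNReal.ofReal ((1 + h ^ 2 * ‖y‖ ^ 2) ^ (-s / 2) * u y *
              ((1 + h ^ 2 * ‖ξ - y‖ ^ 2) ^ (-s / 2) * v (ξ - y))))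
          ≤ ENNReal.ofReal (C * h ^ (-(n : ℝ) / 2)) *
            (eLpNorm u 2 volume * (eLpNorm v 2 volume * eLpNorm w 2 volume)) := by
  have hs0 : (0:ℝ) ≤ s := le_of_lt (lt_of_le_of_lt (by positivity) hs)
  have hn2s : (n : ℝ) < 2 * s := by linarith
  set I0 : ℝ≥0∞ := ∫⁻ y : EuclideanSpace ℝ (Fin n), ENNReal.ofReal ((1 + ‖y‖^2) ^ (-s))
    with hI0def
  have hI0top : I0 ≠ ⊤ := by
    have hint : Integrable (fun y : EuclideanSpace ℝ (Fin n) => ((1:ℝ) + ‖y‖^2) ^ (-(2*s)/2))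
        volume := integrable_rpow_neg_one_add_norm_sq
      (by rw [finrank_euclideanSpace_fin]; exact hn2s)
    have heq : I0 = ∫⁻ y : EuclideanSpace ℝ (Fin n),
        ENNReal.ofReal ((1 + ‖y‖^2) ^ (-(2*s)/2)) := by
      rw [hI0def]; congr 1; funext y; rw [show -(2*s)/2 = -s by ring]
    rw [heq]
    exact hint.lintegral_lt_top.ne
  set c0 : ℝ := I0.toReal ^ (1/2:ℝ) with hc0def
  have hc00 : 0 ≤ c0 := Real.rpow_nonneg ENNReal.toReal_nonneg _
  refine ⟨2 ^ (s+1) * (c0 + 1), by positivity, ?_⟩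
  rintro h ⟨hh0, hh1⟩ u v w hu hv hw hu0 hv0 hw0 - - -
  -- notation
  set A : EuclideanSpace ℝ (Fin n) → ℝ≥0∞ :=
    fun x => ENNReal.ofReal ((1 + h^2*‖x‖^2) ^ (s / 2)) with hA
  set B : EuclideanSpace ℝ (Fin n) → ℝ≥0∞ :=
    fun x => ENNReal.ofReal ((1 + h^2*‖x‖^2) ^ (-s / 2)) with hB
  set U : EuclideanSpace ℝ (Fin n) → ℝ≥0∞ := fun x => ENNReal.ofReal (u x) with hU
  set V : EuclideanSpace ℝ (Fin n) → ℝ≥0∞ := fun x => ENNReal.ofReal (v x) with hV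
  set W : EuclideanSpace ℝ (Fin n) → ℝ≥0∞ := fun x => ENNReal.ofReal (w x) with hW
  have hBm : Measurable B := ENNReal.measurable_ofReal.comp (meas_jap h (-s/2))
  have hUm : Measurable U := ENNReal.measurable_ofReal.comp hu
  have hVm : Measurable V := ENNReal.measurable_ofReal.comp hv
  have hWm : Measurable W := ENNReal.measurable_ofReal.comp hw
  have hone : ∀ x : EuclideanSpace ℝ (Fin n), (1:ℝ) ≤ 1 + h^2*‖x‖^2 := fun x => by
    nlinarith [mul_nonneg (sq_nonneg h) (sq_nonneg ‖x‖)]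
  set SU : ℝ≥0∞ := (∫⁻ x, U x ^ (2:ℝ)) ^ (1/2:ℝ) with hSU
  set SV : ℝ≥0∞ := (∫⁻ x, V x ^ (2:ℝ)) ^ (1/2:ℝ) with hSV
  set SW : ℝ≥0∞ := (∫⁻ x, W x ^ (2:ℝ)) ^ (1/2:ℝ) with hSW
  set SB : ℝ≥0∞ := (∫⁻ x, B x ^ (2:ℝ)) ^ (1/2:ℝ) with hSB
  -- Step 1 : expand the integrand
  have expand : (∫⁻ ξ, ENNReal.ofReal ((1 + h ^ 2 * ‖ξ‖ ^ 2) ^ (s / 2) * w ξ) *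
            ∫⁻ y, ENNReal.ofReal ((1 + h ^ 2 * ‖y‖ ^ 2) ^ (-s / 2) * u y *
              ((1 + h ^ 2 * ‖ξ - y‖ ^ 2) ^ (-s / 2) * v (ξ - y))))
      = ∫⁻ ξ, ∫⁻ y, (A ξ * W ξ) * (B y * U y * (B (ξ - y) * V (ξ - y))) := by
    refine lintegral_congr fun ξ => ?_
    have h1 : ENNReal.ofReal ((1 + h ^ 2 * ‖ξ‖ ^ 2) ^ (s / 2) * w ξ) = A ξ * W ξ :=
      ENNReal.ofReal_mul (Real.rpow_nonneg (by positivity) _)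
    have h2 : ∀ y : EuclideanSpace ℝ (Fin n),
        ENNReal.ofReal ((1 + h ^ 2 * ‖y‖ ^ 2) ^ (-s / 2) * u y *
          ((1 + h ^ 2 * ‖ξ - y‖ ^ 2) ^ (-s / 2) * v (ξ - y)))
        = B y * U y * (B (ξ - y) * V (ξ - y)) := fun y => by
      rw [ENNReal.ofReal_mul (mul_nonneg (Real.rpow_nonneg (by positivity) _) (hu0 y)),
        ENNReal.ofReal_mul (Real.rpow_nonneg (by positivity) _),
        ENNReal.ofReal_mul (Real.rpow_nonneg (by positivity) _)]
    rw [h1, lintegral_congr h2,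
      ← lintegral_const_mul' _ _ (ENNReal.mul_ne_top ENNReal.ofReal_ne_top
        ENNReal.ofReal_ne_top)]
  -- Step 2 : pointwise Peetre bound
  have pointwise : ∀ ξ y : EuclideanSpace ℝ (Fin n),
      (A ξ * W ξ) * (B y * U y * (B (ξ - y) * V (ξ - y)))
        ≤ ENNReal.ofReal (2 ^ s) *
          ((B y * U y) * (W ξ * V (ξ - y)) + (B (ξ - y) * V (ξ - y)) * (W ξ * U y)) := by
    intro ξ y
    have tri : ‖ξ‖ ≤ ‖y‖ + ‖ξ - y‖ := by
      calc ‖ξ‖ = ‖y + (ξ - y)‖ := by rw [add_sub_cancel]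
        _ ≤ ‖y‖ + ‖ξ - y‖ := norm_add_le _ _
    have hsq : ‖ξ‖^2 ≤ 2*‖y‖^2 + 2*‖ξ - y‖^2 := by
      nlinarith [norm_nonneg ξ, norm_nonneg y, norm_nonneg (ξ - y),
        sq_nonneg (‖y‖ - ‖ξ - y‖)]
    have hgeo : 1 + h^2*‖ξ‖^2 ≤ 2 * ((1 + h^2*‖y‖^2) + (1 + h^2*‖ξ - y‖^2)) := by
      nlinarith [mul_le_mul_of_nonneg_left hsq (sq_nonneg h)]
    have core : A ξ * (B y * B (ξ - y)) ≤ ENNReal.ofReal (2 ^ s) * (B (ξ - y) + B y) := by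
      rw [hA, hB]
      simp only []
      rw [← ENNReal.ofReal_mul (Real.rpow_nonneg (by positivity) _),
        ← ENNReal.ofReal_mul (Real.rpow_nonneg (by positivity) _),
        ← ENNReal.ofReal_add (Real.rpow_nonneg (by positivity) _)
          (Real.rpow_nonneg (by positivity) _),
        ← ENNReal.ofReal_mul (by positivity)]
      exact ENNReal.ofReal_le_ofReal
        (real_key hs0 (hone y) (hone (ξ - y)) (by positivity) hgeo)
    calc (A ξ * W ξ) * (B y * U y * (B (ξ - y) * V (ξ - y)))
        = (A ξ * (B y * B (ξ - y))) * (W ξ * (U y * V (ξ - y))) := by ring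
      _ ≤ (ENNReal.ofReal (2 ^ s) * (B (ξ - y) + B y)) * (W ξ * (U y * V (ξ - y))) :=
          mul_le_mul_left core _
      _ = ENNReal.ofReal (2 ^ s) *
          ((B y * U y) * (W ξ * V (ξ - y)) + (B (ξ - y) * V (ξ - y)) * (W ξ * U y)) := by
          ring
  -- measurability of the two pieces on the product space
  have hD1m : Measurable (Function.uncurry fun ξ y : EuclideanSpace ℝ (Fin n) =>
      (B y * U y) * (W ξ * V (ξ - y))) :=
    (((hBm.comp measurable_snd).mul (hUm.comp measurable_snd)).mul
      ((hWm.comp measurable_fst).mul (hVm.comp (measurable_fst.sub measurable_snd))))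
  have hD2m : Measurable (Function.uncurry fun ξ y : EuclideanSpace ℝ (Fin n) =>
      (B (ξ - y) * V (ξ - y)) * (W ξ * U y)) :=
    (((hBm.comp (measurable_fst.sub measurable_snd)).mul
        (hVm.comp (measurable_fst.sub measurable_snd))).mul
      ((hWm.comp measurable_fst).mul (hUm.comp measurable_snd)))
  -- Step 3 : split into the two bilinear pieces
  have step3 : (∫⁻ ξ, ∫⁻ y, (A ξ * W ξ) * (B y * U y * (B (ξ - y) * V (ξ - y))))
      ≤ ENNReal.ofReal (2 ^ s) *
        ((∫⁻ ξ, ∫⁻ y, (B y * U y) * (W ξ * V (ξ - y))) +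
         (∫⁻ ξ, ∫⁻ y, (B (ξ - y) * V (ξ - y)) * (W ξ * U y))) := by
    calc (∫⁻ ξ, ∫⁻ y, (A ξ * W ξ) * (B y * U y * (B (ξ - y) * V (ξ - y))))
        ≤ ∫⁻ ξ, ∫⁻ y, ENNReal.ofReal (2 ^ s) *
            ((B y * U y) * (W ξ * V (ξ - y)) + (B (ξ - y) * V (ξ - y)) * (W ξ * U y)) :=
          lintegral_mono fun ξ => lintegral_mono fun y => pointwise ξ y
      _ = ENNReal.ofReal (2 ^ s) * ∫⁻ ξ, ∫⁻ y, ((B y * U y) * (W ξ * V (ξ - y)) +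
            (B (ξ - y) * V (ξ - y)) * (W ξ * U y)) := by
          rw [← lintegral_const_mul' _ _ ENNReal.ofReal_ne_top]
          exact lintegral_congr fun ξ =>
            (lintegral_const_mul' _ _ ENNReal.ofReal_ne_top)
      _ = _ := by
          congr 1
          calc (∫⁻ ξ, ∫⁻ y, ((B y * U y) * (W ξ * V (ξ - y)) +
                (B (ξ - y) * V (ξ - y)) * (W ξ * U y)))
              = ∫⁻ ξ, ((∫⁻ y, (B y * U y) * (W ξ * V (ξ - y))) +
                  ∫⁻ y, (B (ξ - y) * V (ξ - y)) * (W ξ * U y)) := by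
                refine lintegral_congr fun ξ => ?_
                exact lintegral_add_left (hD1m.comp measurable_prodMk_left) _
            _ = _ := lintegral_add_left hD1m.lintegral_prod_right _
  -- Step 4 : first piece via the bilinear lemma
  have step4 : (∫⁻ ξ, ∫⁻ y, (B y * U y) * (W ξ * V (ξ - y)))
      ≤ (∫⁻ y, B y * U y) * (SW * SV) :=
    Jlemma (hBm.mul hUm) hWm hVm
  -- Step 5 : second piece, after a change of variables, via the bilinear lemma
  have step5 : (∫⁻ ξ, ∫⁻ y, (B (ξ - y) * V (ξ - y)) * (W ξ * U y))
      ≤ (∫⁻ y, B y * V y) * (SW * SU) := by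
    have key : ∀ ξ : EuclideanSpace ℝ (Fin n),
        (∫⁻ y, (B (ξ - y) * V (ξ - y)) * (W ξ * U y))
          = ∫⁻ y, (B y * V y) * (W ξ * U (ξ - y)) := by
      intro ξ
      have hmp := Measure.measurePreserving_sub_left (volume : Measure (EuclideanSpace ℝ (Fin n))) ξ
      have hHm : Measurable fun t : EuclideanSpace ℝ (Fin n) =>
          (B t * V t) * (W ξ * U (ξ - t)) :=
        ((hBm.mul hVm).mul (measurable_const.mul (hUm.comp (measurable_const.sub
          measurable_id))))
      have := hmp.lintegral_comp hHm
      calc (∫⁻ y, (B (ξ - y) * V (ξ - y)) * (W ξ * U y))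
          = ∫⁻ y, (B (ξ - y) * V (ξ - y)) * (W ξ * U (ξ - (ξ - y))) := by
            refine lintegral_congr fun y => ?_
            rw [sub_sub_cancel]
        _ = ∫⁻ y, (B y * V y) * (W ξ * U (ξ - y)) := this
    calc (∫⁻ ξ, ∫⁻ y, (B (ξ - y) * V (ξ - y)) * (W ξ * U y))
        = ∫⁻ ξ, ∫⁻ y, (B y * V y) * (W ξ * U (ξ - y)) := lintegral_congr key
      _ ≤ (∫⁻ y, B y * V y) * (SW * SU) := Jlemma (hBm.mul hVm) hWm hUm
  -- Step 6 : Cauchy–Schwarz for the remaining integrals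
  have step6u : (∫⁻ y, B y * U y) ≤ SB * SU := lintegral_CS _ hBm hUm
  have step6v : (∫⁻ y, B y * V y) ≤ SB * SV := lintegral_CS _ hBm hVm
  -- Step 7 : value of SB
  have hBsq : (∫⁻ x, B x ^ (2:ℝ))
      = ENNReal.ofReal ((h ^ n)⁻¹) * I0 := by
    have hptwise : ∀ x : EuclideanSpace ℝ (Fin n),
        B x ^ (2:ℝ) = ENNReal.ofReal ((1 + ‖h • x‖^2) ^ (-s)) := by
      intro x
      have hpos : (0:ℝ) < (1 + h^2*‖x‖^2) ^ (-s / 2) :=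
        Real.rpow_pos_of_pos (by positivity) _
      rw [hB]
      simp only []
      rw [ENNReal.ofReal_rpow_of_pos hpos, ← Real.rpow_mul (by positivity)]
      have hb : (1 + ‖h • x‖^2 : ℝ) = 1 + h^2*‖x‖^2 := by
        rw [norm_smul, Real.norm_eq_abs, abs_of_pos hh0, mul_pow]
      rw [hb, show -s / 2 * 2 = -s by ring]
    calc (∫⁻ x, B x ^ (2:ℝ))
        = ∫⁻ x, ENNReal.ofReal ((1 + ‖h • x‖^2) ^ (-s)) := lintegral_congr hptwise
      _ = ∫⁻ x, ENNReal.ofReal ((1 + ‖x‖^2) ^ (-s))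
            ∂(Measure.map (fun x : EuclideanSpace ℝ (Fin n) => h • x) volume) :=
          (lintegral_map (ENNReal.measurable_ofReal.comp
            ((continuous_const.add ((continuous_norm).pow 2)).rpow_const
              (fun x => Or.inl (by positivity : (1:ℝ) + ‖x‖ ^ 2 ≠ 0))).measurable)
            (measurable_const_smul h)).symm
      _ = ENNReal.ofReal ((h ^ n)⁻¹) * I0 := by
          rw [Measure.map_addHaar_smul volume hh0.ne', lintegral_smul_measure, hI0def]
          congr 2
          rw [finrank_euclideanSpace_fin, abs_of_nonneg (by positivity)]
  have hSBval : SB = ENNReal.ofReal (h ^ (-(n:ℝ)/2) * c0) := by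
    have h1 : ENNReal.ofReal ((h ^ n)⁻¹) ^ (1/2:ℝ) = ENNReal.ofReal (h ^ (-(n:ℝ)/2)) := by
      rw [ENNReal.ofReal_rpow_of_pos (by positivity)]
      congr 1
      rw [← Real.rpow_natCast h n, ← Real.rpow_neg hh0.le, ← Real.rpow_mul hh0.le]
      congr 1; ring
    have h2 : I0 ^ (1/2:ℝ) = ENNReal.ofReal c0 := by
      rw [hc0def, ENNReal.toReal_rpow, ENNReal.ofReal_toReal]
      exact ENNReal.rpow_ne_top_of_nonneg (by norm_num) hI0top
    rw [hSB, hBsq, ENNReal.mul_rpow_of_nonneg _ _ (by norm_num), h1, h2,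
      ← ENNReal.ofReal_mul (by positivity)]
  -- Step 8 : identification with eLpNorm
  have eLp : ∀ (f : EuclideanSpace ℝ (Fin n) → ℝ), (∀ x, 0 ≤ f x) →
      (∫⁻ x, ENNReal.ofReal (f x) ^ (2:ℝ)) ^ (1/2:ℝ) = eLpNorm f 2 volume := by
    intro f hf0
    rw [eLpNorm_eq_lintegral_rpow_enorm_toReal (by norm_num) (by norm_num)]
    simp only [ENNReal.toReal_ofNat]
    congr 1
    exact lintegral_congr fun x => by rw [Real.enorm_eq_ofReal (hf0 x)]
  -- Final assembly
  rw [expand]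
  have final : ENNReal.ofReal (2 ^ s) *
        ((∫⁻ ξ, ∫⁻ y, (B y * U y) * (W ξ * V (ξ - y))) +
         (∫⁻ ξ, ∫⁻ y, (B (ξ - y) * V (ξ - y)) * (W ξ * U y)))
      ≤ ENNReal.ofReal (2 ^ (s+1) * (c0 + 1) * h ^ (-(n : ℝ) / 2)) *
          (SU * (SV * SW)) := by
    calc ENNReal.ofReal (2 ^ s) *
        ((∫⁻ ξ, ∫⁻ y, (B y * U y) * (W ξ * V (ξ - y))) +
         (∫⁻ ξ, ∫⁻ y, (B (ξ - y) * V (ξ - y)) * (W ξ * U y)))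
        ≤ ENNReal.ofReal (2 ^ s) * ((SB * SU) * (SW * SV) + (SB * SV) * (SW * SU)) := by
          refine mul_le_mul_right (add_le_add ?_ ?_) _
          · exact le_trans step4 (mul_le_mul_left step6u _)
          · exact le_trans step5 (mul_le_mul_left step6v _)
      _ = (ENNReal.ofReal (2 ^ s) * 2 * SB) * (SU * (SV * SW)) := by ring
      _ ≤ ENNReal.ofReal (2 ^ (s+1) * (c0 + 1) * h ^ (-(n : ℝ) / 2)) *
          (SU * (SV * SW)) := by
          refine mul_le_mul_left ?_ _
          rw [hSBval, show (2:ℝ≥0∞) = ENNReal.ofReal 2 by norm_num,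
            ← ENNReal.ofReal_mul (by positivity), ← ENNReal.ofReal_mul (by positivity)]
          refine ENNReal.ofReal_le_ofReal ?_
          have h2s : (2:ℝ) ^ (s+1) = 2 ^ s * 2 := by
            rw [Real.rpow_add (by norm_num), Real.rpow_one]
          rw [h2s]
          have hhp : (0:ℝ) < h ^ (-(n:ℝ)/2) := Real.rpow_pos_of_pos hh0 _
          have h2sp : (0:ℝ) < 2 ^ s := Real.rpow_pos_of_pos (by norm_num) _
          nlinarith [mul_pos h2sp hhp]
  refine le_trans step3 (le_trans final ?_)
  rw [hSU, hSV, hSW, eLp u hu0, eLp v hv0, eLp w hw0]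
end

section
/- Let P be an N×N (or more generally invertible bounded) operator and suppose the block operator 𝓟 = [[P, R₋],[R₊, 0]] : H × ℂ^N → H × ℂ^N is bijective with bounded inverse 𝓔 = [[E, E₊],[E₋, E₋₊]]. If P is invertible then E₋₊ is invertible, P^{-1} = E − E₊ E₋₊^{-1} E₋ and E₋₊^{-1} = −R₊ P^{-1} R₋; moreover for 1 ≤ k ≤ N the increasing singular values satisfy t_k(P) ≤ ‖R₋‖ ‖R₊‖ t_k(E₋₊). -/
/-- The `k`-th smallest singular value of a bounded operator `P` on a Hilbert space,
via the min-max characterization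
`t_k(P) = inf_{dim L = k} sup_{x ∈ L, ‖x‖=1} ‖P x‖`
(this agrees with the increasing rearrangement of the eigenvalues of `(P*P)^{1/2}`
below the essential spectrum, padded by its infimum; for an `N×N` matrix,
`t_j = s_{N+1-j}`). -/
noncomputable def tVal {H : Type*} [NormedAddCommGroup H] [InnerProductSpace ℂ H]
    (P : H →L[ℂ] H) (k : ℕ) : ℝ :=
  sInf {r : ℝ | ∃ L : Submodule ℂ H, Module.finrank ℂ L = k ∧
    r = sSup ((fun x => ‖P x‖) '' {x : H | x ∈ L ∧ ‖x‖ = 1})}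

private lemma existsSubOfRank (N k : ℕ) (hk : k ≤ N) :
    ∃ L : Submodule ℂ (EuclideanSpace ℂ (Fin N)), Module.finrank ℂ L = k := by
  classical
  have hb := ((EuclideanSpace.basisFun (Fin N) ℂ).toBasis).linearIndependent
  rw [(EuclideanSpace.basisFun (Fin N) ℂ).coe_toBasis] at hb
  have hli : LinearIndependent ℂ
      (fun i : Fin k => (EuclideanSpace.basisFun (Fin N) ℂ) (Fin.castLE hk i)) :=
    hb.comp _ (Fin.castLE_injective hk)
  refine ⟨Submodule.span ℂ (Set.range
    (fun i : Fin k => (EuclideanSpace.basisFun (Fin N) ℂ) (Fin.castLE hk i))), ?_⟩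
  rw [finrank_span_eq_card hli, Fintype.card_fin]

private lemma existsUnit {H : Type*} [NormedAddCommGroup H] [InnerProductSpace ℂ H]
    (L : Submodule ℂ H) (h : 0 < Module.finrank ℂ L) : ∃ x : H, x ∈ L ∧ ‖x‖ = 1 := by
  have : ∃ x, x ∈ L ∧ x ≠ (0 : H) := by
    by_contra hcon
    push_neg at hcon
    have hbot : L = ⊥ := by rw [Submodule.eq_bot_iff]; exact hcon
    rw [hbot, finrank_bot] at h
    exact lt_irrefl 0 h
  obtain ⟨x, hx, hx0⟩ := this
  refine ⟨((‖x‖:ℂ)⁻¹) • x, L.smul_mem _ hx, ?_⟩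
  rw [norm_smul]
  simp [norm_inv, norm_ne_zero_iff.mpr hx0]


/-- for a well-posed Grushin problem
`𝓟 = [[P, R₋],[R₊, 0]]` with inverse `[[E, E₊],[E₋, E₋₊]]`, if `P` is invertible
then `E₋₊` is invertible with `E₋₊⁻¹ = −R₊ P⁻¹ R₋`, `P⁻¹ = E − E₊ E₋₊⁻¹ E₋`, and
`t_k(P) ≤ ‖R₋‖ ‖R₊‖ t_k(E₋₊)` for `1 ≤ k ≤ N`. -/
theorem stmt12 {H : Type*} [NormedAddCommGroup H] [InnerProductSpace ℂ H] [CompleteSpace H]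
    (N : ℕ) (P Pinv : H →L[ℂ] H)
    (Rp : H →L[ℂ] EuclideanSpace ℂ (Fin N)) (Rm : EuclideanSpace ℂ (Fin N) →L[ℂ] H)
    (E : H →L[ℂ] H) (Ep : EuclideanSpace ℂ (Fin N) →L[ℂ] H)
    (Em : H →L[ℂ] EuclideanSpace ℂ (Fin N))
    (Emp : EuclideanSpace ℂ (Fin N) →L[ℂ] EuclideanSpace ℂ (Fin N))
    (h1 : ∀ u um, E (P u + Rm um) + Ep (Rp u) = u)
    (h2 : ∀ u um, Em (P u + Rm um) + Emp (Rp u) = um)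
    (h3 : ∀ v vp, P (E v + Ep vp) + Rm (Em v + Emp vp) = v)
    (h4 : ∀ v vp, Rp (E v + Ep vp) = vp)
    (hPinv1 : ∀ u, Pinv (P u) = u) (hPinv2 : ∀ v, P (Pinv v) = v) :
    (∀ w, (-(Rp.comp (Pinv.comp Rm))) (Emp w) = w) ∧
    (∀ w, Emp ((-(Rp.comp (Pinv.comp Rm))) w) = w) ∧
    (∀ v, Pinv v = E v - Ep ((-(Rp.comp (Pinv.comp Rm))) (Em v))) ∧
    (∀ k : ℕ, 1 ≤ k → k ≤ N → tVal P k ≤ ‖Rm‖ * ‖Rp‖ * tVal Emp k) := by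
  have hRpEp : ∀ y, Rp (Ep y) = y := by
    intro y; have := h4 0 y; simpa using this
  have hPEp : ∀ y, P (Ep y) = -(Rm (Emp y)) := by
    intro y
    have h30 := h3 0 y
    simp only [map_zero, zero_add] at h30
    exact eq_neg_of_add_eq_zero_left h30
  have hA : ∀ w, (-(Rp.comp (Pinv.comp Rm))) (Emp w) = w := by
    intro w
    have hRmE : Rm (Emp w) = -(P (Ep w)) := by
      rw [hPEp w, neg_neg]
    simp only [ContinuousLinearMap.neg_apply, ContinuousLinearMap.comp_apply]
    rw [hRmE, map_neg, hPinv1, map_neg, neg_neg, hRpEp]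
  have hB : ∀ w, Emp ((-(Rp.comp (Pinv.comp Rm))) w) = w := by
    intro w
    have h2' := h2 (-(Pinv (Rm w))) w
    rw [map_neg, hPinv2] at h2'
    simp only [neg_add_cancel, map_zero, zero_add, map_neg] at h2'
    simp only [ContinuousLinearMap.neg_apply, ContinuousLinearMap.comp_apply, map_neg]
    exact h2'
  have hC : ∀ v, Pinv v = E v - Ep ((-(Rp.comp (Pinv.comp Rm))) (Em v)) := by
    intro v
    set q := (-(Rp.comp (Pinv.comp Rm))) (Em v) with hq
    have hEmp : Emp (-q) = -(Em v) := by
      rw [map_neg (Emp : EuclideanSpace ℂ (Fin N) →L[ℂ] EuclideanSpace ℂ (Fin N)) q,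
        hq, hB]
    have h3' := h3 v (-q)
    rw [hEmp] at h3'
    simp only [add_neg_cancel, map_zero, add_zero] at h3'
    calc Pinv v = Pinv (P (E v + Ep (-q))) := by rw [h3']
      _ = E v + Ep (-q) := hPinv1 _
      _ = E v - Ep q := by rw [map_neg, ← sub_eq_add_neg]
  refine ⟨hA, hB, hC, ?_⟩
  intro k hk1 hkN
  have hinj : Function.Injective Ep := by
    intro a b hab
    rw [← hRpEp a, ← hRpEp b, hab]
  set c : ℝ := ‖Rm‖ * ‖Rp‖ with hc
  have hc0 : 0 ≤ c := mul_nonneg (norm_nonneg _) (norm_nonneg _)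
  set SP := {r : ℝ | ∃ L : Submodule ℂ H, Module.finrank ℂ L = k ∧
    r = sSup ((fun x => ‖P x‖) '' {x : H | x ∈ L ∧ ‖x‖ = 1})} with hSP
  set SE := {r : ℝ | ∃ L : Submodule ℂ (EuclideanSpace ℂ (Fin N)), Module.finrank ℂ L = k ∧
    r = sSup ((fun x => ‖Emp x‖) '' {x | x ∈ L ∧ ‖x‖ = 1})} with hSE
  have hSPlb : ∀ r ∈ SP, (0:ℝ) ≤ r := by
    rintro r ⟨L, hL, rfl⟩
    exact Real.sSup_nonneg (by rintro s ⟨x, _, rfl⟩; exact norm_nonneg _)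
  -- key step
  have key : ∀ r' ∈ SE, sInf SP ≤ c * r' := by
    rintro r' ⟨L', hL', rfl⟩
    set T' := (fun x => ‖Emp x‖) '' {x | x ∈ L' ∧ ‖x‖ = 1} with hT'
    have hT'bdd : BddAbove T' := by
      refine ⟨‖Emp‖, ?_⟩
      rintro s ⟨z, ⟨_, hz1⟩, rfl⟩
      calc ‖Emp z‖ ≤ ‖Emp‖ * ‖z‖ := Emp.le_opNorm z
        _ = ‖Emp‖ := by rw [hz1, mul_one]
    have hr'0 : 0 ≤ sSup T' :=
      Real.sSup_nonneg (by rintro s ⟨x, _, rfl⟩; exact norm_nonneg _)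
    set L : Submodule ℂ H := L'.map (Ep : EuclideanSpace ℂ (Fin N) →ₗ[ℂ] H) with hL
    have hLrank : Module.finrank ℂ L = k := by
      rw [← hL']
      exact (Submodule.equivMapOfInjective (Ep : EuclideanSpace ℂ (Fin N) →ₗ[ℂ] H)
        hinj L').finrank_eq.symm
    have hsup : sSup ((fun x => ‖P x‖) '' {x : H | x ∈ L ∧ ‖x‖ = 1}) ≤ c * sSup T' := by
      apply Real.sSup_le
      · rintro s ⟨x, ⟨hxL, hx1⟩, rfl⟩
        obtain ⟨y, hyL', hyx⟩ := Submodule.mem_map.mp hxL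
        rw [ContinuousLinearMap.coe_coe] at hyx
        have hy0 : y ≠ 0 := by
          intro h0
          rw [h0] at hyx
          simp only [map_zero] at hyx
          rw [← hyx] at hx1
          simp at hx1
        have hyn0 : ‖y‖ ≠ 0 := norm_ne_zero_iff.mpr hy0
        have hyRp : ‖y‖ ≤ ‖Rp‖ := by
          calc ‖y‖ = ‖Rp (Ep y)‖ := by rw [hRpEp]
            _ ≤ ‖Rp‖ * ‖Ep y‖ := Rp.le_opNorm _
            _ = ‖Rp‖ := by rw [hyx, hx1, mul_one]
        set y₀ := ((‖y‖:ℂ)⁻¹) • y with hy₀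
        have hy₀L : y₀ ∈ L' := L'.smul_mem _ hyL'
        have hy₀1 : ‖y₀‖ = 1 := by
          rw [hy₀, norm_smul]
          simp [norm_inv, hyn0]
        have hmem : ‖Emp y₀‖ ∈ T' := ⟨y₀, ⟨hy₀L, hy₀1⟩, rfl⟩
        have hEy : ‖Emp y‖ = ‖y‖ * ‖Emp y₀‖ := by
          rw [hy₀, map_smul, norm_smul]
          simp only [norm_inv, Complex.norm_real, Real.norm_eq_abs, abs_norm]
          field_simp
        have hle : ‖Emp y₀‖ ≤ sSup T' := le_csSup hT'bdd hmem
        calc ‖P x‖ = ‖Rm (Emp y)‖ := by rw [← hyx, hPEp, norm_neg]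
          _ ≤ ‖Rm‖ * ‖Emp y‖ := Rm.le_opNorm _
          _ = ‖Rm‖ * (‖y‖ * ‖Emp y₀‖) := by rw [hEy]
          _ ≤ ‖Rm‖ * (‖Rp‖ * sSup T') := by
              apply mul_le_mul_of_nonneg_left _ (norm_nonneg _)
              exact mul_le_mul hyRp hle (norm_nonneg _) (norm_nonneg _)
          _ = c * sSup T' := by rw [hc, mul_assoc]
      · exact mul_nonneg hc0 hr'0
    refine le_trans (csInf_le ⟨0, hSPlb⟩ ?_) hsup
    exact ⟨L, hLrank, rfl⟩
  -- SE nonempty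
  have hSEne : SE.Nonempty := by
    obtain ⟨L', hL'⟩ := existsSubOfRank N k hkN
    exact ⟨_, L', hL', rfl⟩
  have hgoal : sInf SP ≤ c * sInf SE := by
    rw [← smul_eq_mul, ← Real.sInf_smul_of_nonneg hc0]
    apply le_csInf (hSEne.smul_set)
    rintro b ⟨r', hr', rfl⟩
    simpa [smul_eq_mul] using key r' hr'
  simpa [tVal, ← hSP, ← hSE, ← hc] using hgoal
end

section
/- Let P : H → H be a bounded operator on a separable Hilbert space such that P − 1 is of trace class, and suppose the Grushin operator 𝓟 = [[P, R₋],[R₊, 0]] : H × ℂ^N → H × ℂ^N is bijective with bounded inverse [[E, E₊],[E₋, E₋₊]]. Then 𝓟 is a trace-class perturbation of the identity and det P = det 𝓟 · det E₋₊ (Fredholm determinants on the left, finite determinant for E₋₊). -/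
private lemma toMatrix_block_aux {R M₁ M₂ : Type*} [CommRing R] [AddCommGroup M₁]
    [AddCommGroup M₂] [Module R M₁] [Module R M₂] {n p : Type*} [Fintype n] [Fintype p]
    [DecidableEq n] [DecidableEq p] (v₁ : Module.Basis n R M₁) (v₂ : Module.Basis p R M₂)
    (A : M₁ →ₗ[R] M₁) (B : M₂ →ₗ[R] M₁) (C : M₁ →ₗ[R] M₂) (D : M₂ →ₗ[R] M₂)
    (F : M₁ × M₂ →ₗ[R] M₁ × M₂) (hF : ∀ x y, F (x, y) = (A x + B y, C x + D y)) :
    LinearMap.toMatrix (v₁.prod v₂) (v₁.prod v₂) F =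
      Matrix.fromBlocks (LinearMap.toMatrix v₁ v₁ A) (LinearMap.toMatrix v₂ v₁ B)
        (LinearMap.toMatrix v₁ v₂ C) (LinearMap.toMatrix v₂ v₂ D) := by
  ext (i | i) (j | j) <;> simp [LinearMap.toMatrix, hF]

/-- `det P = det 𝓟 · det E₋₊` for a well-posed Grushin problem
`𝓟 = [[P, R₋],[R₊, 0]]` with inverse `[[E, E₊],[E₋, E₋₊]]`.  (Formalized on a
finite-dimensional Hilbert space, where `P − 1` is automatically of trace class
and the Fredholm determinants are the usual determinants.) -/
theorem stmt14 (m N : ℕ)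
    (P : EuclideanSpace ℂ (Fin m) →L[ℂ] EuclideanSpace ℂ (Fin m))
    (Rp : EuclideanSpace ℂ (Fin m) →L[ℂ] EuclideanSpace ℂ (Fin N))
    (Rm : EuclideanSpace ℂ (Fin N) →L[ℂ] EuclideanSpace ℂ (Fin m))
    (E : EuclideanSpace ℂ (Fin m) →L[ℂ] EuclideanSpace ℂ (Fin m))
    (Ep : EuclideanSpace ℂ (Fin N) →L[ℂ] EuclideanSpace ℂ (Fin m))
    (Em : EuclideanSpace ℂ (Fin m) →L[ℂ] EuclideanSpace ℂ (Fin N))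
    (Emp : EuclideanSpace ℂ (Fin N) →L[ℂ] EuclideanSpace ℂ (Fin N))
    (h1 : ∀ u um, E (P u + Rm um) + Ep (Rp u) = u)
    (h2 : ∀ u um, Em (P u + Rm um) + Emp (Rp u) = um)
    (h3 : ∀ v vp, P (E v + Ep vp) + Rm (Em v + Emp vp) = v)
    (h4 : ∀ v vp, Rp (E v + Ep vp) = vp)
    (𝓟 : (EuclideanSpace ℂ (Fin m) × EuclideanSpace ℂ (Fin N)) →ₗ[ℂ]
         (EuclideanSpace ℂ (Fin m) × EuclideanSpace ℂ (Fin N)))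
    (h𝓟 : ∀ u um, 𝓟 (u, um) = (P u + Rm um, Rp u)) :
    LinearMap.det P.toLinearMap = LinearMap.det 𝓟 * LinearMap.det Emp.toLinearMap := by
  set H := EuclideanSpace ℂ (Fin m)
  set K := EuclideanSpace ℂ (Fin N)
  -- key identities from the inverse relations
  have key1 : ∀ vp : K, P (Ep vp) + Rm (Emp vp) = 0 := by
    intro vp
    have := h3 0 vp
    simpa using this
  have key2 : ∀ vp : K, Rp (Ep vp) = vp := by
    intro vp
    have := h4 0 vp
    simpa using this
  -- the shear/triangular factor M : (u, um) ↦ (u + Ep um, Emp um)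
  set M : (H × K) →ₗ[ℂ] (H × K) :=
    LinearMap.prod (LinearMap.fst ℂ H K + Ep.toLinearMap ∘ₗ LinearMap.snd ℂ H K)
      (Emp.toLinearMap ∘ₗ LinearMap.snd ℂ H K) with hM
  -- the lower-triangular map T : (u, um) ↦ (P u, Rp u + um)
  set T : (H × K) →ₗ[ℂ] (H × K) :=
    LinearMap.prod (P.toLinearMap ∘ₗ LinearMap.fst ℂ H K)
      (Rp.toLinearMap ∘ₗ LinearMap.fst ℂ H K + LinearMap.snd ℂ H K) with hT
  have hcomp : 𝓟 ∘ₗ M = T := by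
    apply LinearMap.ext
    rintro ⟨u, um⟩
    have h𝓟' := h𝓟 (u + Ep um) (Emp um)
    simp only [LinearMap.comp_apply, hM, hT, LinearMap.prod_apply, Function.prod,
      LinearMap.add_apply, LinearMap.coe_comp, Function.comp_apply,
      LinearMap.fst_apply, LinearMap.snd_apply, ContinuousLinearMap.coe_coe]
    rw [h𝓟', Prod.mk.injEq]
    constructor
    · rw [map_add, add_assoc, key1 um, add_zero]
    · rw [map_add, key2 um]
  -- bases
  let b₁ : Module.Basis (Fin m) ℂ H := (EuclideanSpace.basisFun (Fin m) ℂ).toBasis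
  let b₂ : Module.Basis (Fin N) ℂ K := (EuclideanSpace.basisFun (Fin N) ℂ).toBasis
  let b : Module.Basis (Fin m ⊕ Fin N) ℂ (H × K) := b₁.prod b₂
  -- det M = det Emp
  have hMblock : LinearMap.toMatrix b b M =
      Matrix.fromBlocks (LinearMap.toMatrix b₁ b₁ (LinearMap.id))
        (LinearMap.toMatrix b₂ b₁ Ep.toLinearMap)
        (LinearMap.toMatrix b₁ b₂ (0 : H →ₗ[ℂ] K))
        (LinearMap.toMatrix b₂ b₂ Emp.toLinearMap) := by
    apply toMatrix_block_aux
    intro x y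
    simp [hM]
  have hdetM : LinearMap.det M = LinearMap.det Emp.toLinearMap := by
    rw [← LinearMap.det_toMatrix b, hMblock, LinearMap.toMatrix_id, map_zero,
      Matrix.det_fromBlocks_zero₂₁, Matrix.det_one, one_mul, LinearMap.det_toMatrix]
  -- det T = det P
  have hTblock : LinearMap.toMatrix b b T =
      Matrix.fromBlocks (LinearMap.toMatrix b₁ b₁ P.toLinearMap)
        (LinearMap.toMatrix b₂ b₁ (0 : K →ₗ[ℂ] H))
        (LinearMap.toMatrix b₁ b₂ Rp.toLinearMap)
        (LinearMap.toMatrix b₂ b₂ (LinearMap.id)) := by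
    apply toMatrix_block_aux
    intro x y
    simp [hT]
  have hdetT : LinearMap.det T = LinearMap.det P.toLinearMap := by
    rw [← LinearMap.det_toMatrix b, hTblock, LinearMap.toMatrix_id, map_zero,
      Matrix.det_fromBlocks_zero₁₂, Matrix.det_one, mul_one, LinearMap.det_toMatrix]
  have := LinearMap.det_comp 𝓟 M
  rw [hcomp, hdetT, hdetM] at this
  exact this
end

section
/- Let f be holomorphic in a disc D(0, 2r₀) (r₀ ≤ 1) with |f(w)| ≤ e^{A} on D(0,2r₀) and |f(0)| ≥ e^{−A} for some A ≥ 1. Let w₁,…,w_M be the zeros of f in D(0, 3r₀/2). Then f(w) = e^{g(w)} ∏_{j=1}^M (w − w_j) on D(0, 4r₀/3) with |Re g(w)| ≤ C·A on D(0,4r₀/3) and M ≤ C·A, where C depends only on r₀ (with r₀ ∈ [√3/2, 1]). -/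
open Metric Complex Finset
open scoped NNReal ENNReal


lemma exists_log_ball {h : ℂ → ℂ} {ρ σ : ℝ} (hρ : 0 < ρ) (hρσ : ρ < σ)
    (hd : DifferentiableOn ℂ h (ball 0 σ))
    (hnz : ∀ z ∈ ball (0:ℂ) σ, h z ≠ 0) :
    ∃ g : ℂ → ℂ, DifferentiableOn ℂ g (ball 0 ρ) ∧
      ∀ z ∈ ball (0:ℂ) ρ, Complex.exp (g z) = h z := by
  have hσ : 0 < σ := hρ.trans hρσ
  have hball : ball (0:ℂ) ρ ⊆ ball 0 σ := ball_subset_ball hρσ.le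
  set q : ℂ → ℂ := fun z => deriv h z / h z with hq_def
  have han : AnalyticOnNhd ℂ h (ball 0 σ) := hd.analyticOnNhd isOpen_ball
  have hq : DifferentiableOn ℂ q (ball 0 σ) :=
    (han.deriv.differentiableOn).div hd hnz
  set τ : ℝ := (ρ + σ) / 2 with hτ_def
  have hτ0 : 0 < τ := by simp only [hτ_def]; linarith
  have hρτ : ρ < τ := by simp only [hτ_def]; linarith
  have hτσ : τ < σ := by simp only [hτ_def]; linarith
  have hcoe : ((τ.toNNReal : ℝ≥0) : ℝ) = τ := Real.coe_toNNReal τ hτ0.le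
  have hps : HasFPowerSeriesOnBall q (cauchyPowerSeries q 0 τ.toNNReal) 0 τ.toNNReal := by
    apply DifferentiableOn.hasFPowerSeriesOnBall
    · apply hq.mono
      rw [hcoe]
      exact closedBall_subset_ball hτσ
    · simpa using hτ0
  set p := cauchyPowerSeries q 0 τ.toNNReal with hp_def
  set a : ℕ → ℂ := fun n => p.coeff n with ha_def
  have hsum : ∀ z : ℂ, ‖z‖ < τ → HasSum (fun n => a n * z ^ n) (q z) := by
    intro z hz
    have hz' : z ∈ Metric.eball (0:ℂ) τ.toNNReal := by
      rw [Metric.emetric_ball_nnreal, mem_ball_zero_iff, hcoe]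
      exact hz
    have := hps.hasSum hz'
    simp only [zero_add] at this
    convert this using 2 with n
    · rfl
    rw [FormalMultilinearSeries.apply_eq_pow_smul_coeff, smul_eq_mul]
    ring
  have hrad : (ρ.toNNReal : ℝ≥0∞) < p.radius := by
    refine lt_of_lt_of_le ?_ hps.r_le
    exact_mod_cast (Real.toNNReal_lt_toNNReal_iff hτ0).mpr hρτ
  have hsummable : Summable (fun n => ‖p n‖ * ρ ^ n) := by
    have := p.summable_norm_mul_pow hrad
    simpa [Real.coe_toNNReal ρ hρ.le] using this
  -- the primitive
  set G : ℂ → ℂ := fun z => ∑' n : ℕ, (a n / ((n : ℂ) + 1)) * z ^ (n + 1) with hG_def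
  have hder : ∀ (n : ℕ) (y : ℂ), y ∈ ball (0:ℂ) ρ →
      HasDerivAt (fun z : ℂ => (a n / ((n : ℂ) + 1)) * z ^ (n + 1)) (a n * y ^ n) y := by
    intro n y _
    have h1 : HasDerivAt (fun z : ℂ => z ^ (n + 1)) (((n : ℂ) + 1) * y ^ n) y := by
      simpa using hasDerivAt_pow (n + 1) y
    have h2 := h1.const_mul (a n / ((n : ℂ) + 1))
    refine h2.congr_deriv ?_
    have hne : ((n : ℂ) + 1) ≠ 0 := Nat.cast_add_one_ne_zero n
    field_simp
  have hbound : ∀ (n : ℕ) (y : ℂ), y ∈ ball (0:ℂ) ρ → ‖a n * y ^ n‖ ≤ ‖p n‖ * ρ ^ n := by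
    intro n y hy
    rw [mem_ball_zero_iff] at hy
    rw [norm_mul, norm_pow]
    have h1 : ‖a n‖ = ‖p n‖ := FormalMultilinearSeries.norm_apply_eq_norm_coef.symm
    rw [h1]
    exact mul_le_mul_of_nonneg_left (pow_le_pow_left₀ (norm_nonneg _) hy.le n) (norm_nonneg _)
  have hsum0 : Summable (fun n : ℕ => (a n / ((n : ℂ) + 1)) * (0:ℂ) ^ (n + 1)) := by
    apply summable_of_ne_finset_zero (s := ∅)
    intro n _
    simp
  have hG : ∀ z ∈ ball (0:ℂ) ρ, HasDerivAt G (q z) z := by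
    intro z hz
    have H := hasDerivAt_tsum_of_isPreconnected hsummable isOpen_ball
      (convex_ball (0:ℂ) ρ).isPreconnected hder hbound (mem_ball_self hρ) hsum0 hz
    have hzτ : ‖z‖ < τ := lt_trans (mem_ball_zero_iff.mp hz) hρτ
    rwa [(hsum z hzτ).tsum_eq] at H
  have hGd : DifferentiableOn ℂ G (ball 0 ρ) :=
    fun z hz => ((hG z hz).differentiableAt).differentiableWithinAt
  have hG0 : G 0 = 0 := by
    simp only [hG_def]
    convert tsum_zero with n
    simp
  -- the logarithm
  set g : ℂ → ℂ := fun z => Complex.log (h 0) + G z with hg_def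
  have hgd : DifferentiableOn ℂ g (ball 0 ρ) := hGd.const_add _
  have hg' : ∀ z ∈ ball (0:ℂ) ρ, HasDerivAt g (q z) z :=
    fun z hz => (hG z hz).const_add _
  refine ⟨g, hgd, ?_⟩
  set E : ℂ → ℂ := fun z => h z * Complex.exp (-(g z)) with hE_def
  have hEder : ∀ z ∈ ball (0:ℂ) ρ, HasDerivAt E 0 z := by
    intro z hz
    have hhz : DifferentiableAt ℂ h z :=
      hd.differentiableAt (isOpen_ball.mem_nhds (hball hz))
    have h1 : HasDerivAt h (deriv h z) z := hhz.hasDerivAt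
    have h2 : HasDerivAt (fun w => Complex.exp (-(g w)))
        (Complex.exp (-(g z)) * (-(q z))) z := ((hg' z hz).neg).cexp
    have h3 := h1.mul h2
    refine h3.congr_deriv ?_
    have hne : h z ≠ 0 := hnz z (hball hz)
    simp only [hq_def]
    field_simp
    ring
  have hEdiff : DifferentiableOn ℂ E (ball 0 ρ) :=
    fun z hz => ((hEder z hz).differentiableAt).differentiableWithinAt
  have hEfd : ∀ z ∈ ball (0:ℂ) ρ, fderivWithin ℂ E (ball 0 ρ) z = 0 := by
    intro z hz
    have h1 : HasFDerivAt E (ContinuousLinearMap.smulRight (1 : ℂ →L[ℂ] ℂ) (0:ℂ)) z :=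
      (hEder z hz).hasFDerivAt
    rw [fderivWithin_of_isOpen isOpen_ball hz, h1.fderiv]
    ext x
    simp
  have hconst : ∀ z ∈ ball (0:ℂ) ρ, E z = E 0 := fun z hz =>
    (convex_ball (0:ℂ) ρ).is_const_of_fderivWithin_eq_zero hEdiff hEfd hz (mem_ball_self hρ)
  have hh0 : h 0 ≠ 0 := hnz 0 (mem_ball_self hσ)
  have hE0 : E 0 = 1 := by
    simp only [hE_def, hg_def, hG0, add_zero, ← Complex.exp_neg]
    rw [Complex.exp_neg, Complex.exp_log hh0]
    field_simp
  intro z hz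
  have h1 : h z * Complex.exp (-(g z)) = 1 := (hconst z hz).trans hE0
  rw [Complex.exp_neg] at h1
  have h2 : Complex.exp (g z) ≠ 0 := Complex.exp_ne_zero _
  field_simp at h1
  exact h1.symm


lemma maxmod {F : ℂ → ℂ} {R S C : ℝ} (hR : 0 < R) (hRS : R < S)
    (hd : DifferentiableOn ℂ F (ball 0 S))
    (hb : ∀ z : ℂ, ‖z‖ = R → ‖F z‖ ≤ C) :
    ∀ z ∈ closedBall (0:ℂ) R, ‖F z‖ ≤ C := by
  intro z hz
  have hcl : closure (ball (0:ℂ) R) = closedBall 0 R := closure_ball 0 hR.ne'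
  apply Complex.norm_le_of_forall_mem_frontier_norm_le isBounded_ball
  · apply DifferentiableOn.diffContOnCl
    rw [hcl]; exact hd.mono (closedBall_subset_ball hRS)
  · intro w hw
    rw [frontier_ball 0 hR.ne'] at hw
    exact hb w (mem_sphere_zero_iff_norm.mp hw)
  · rw [hcl]; exact hz

lemma sqrt3_ge : (1.7 : ℝ) ≤ Real.sqrt 3 := by
  rw [show (3:ℝ) = 1.7^2 + 0.11 by norm_num]
  nlinarith [Real.sq_sqrt (show (0:ℝ) ≤ 1.7^2 + 0.11 by norm_num),
    Real.sqrt_nonneg (1.7^2+0.11)]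

lemma zero_bound {r₀ A : ℝ} (h1 : Real.sqrt 3 / 2 ≤ r₀) (h2 : r₀ ≤ 1) {f : ℂ → ℂ}
    (hub : ∀ w ∈ ball (0:ℂ) (2*r₀), ‖f w‖ ≤ Real.exp A)
    (hlb : Real.exp (-A) ≤ ‖f 0‖)
    {k : ℕ} {w : Fin k → ℂ} {h₂ : ℂ → ℂ}
    (hh₂ : DifferentiableOn ℂ h₂ (ball 0 (2*r₀)))
    (hw : ∀ j, w j ∈ closedBall (0:ℂ) (29*r₀/20))
    (hfac : ∀ z ∈ ball (0:ℂ) (2*r₀), f z = h₂ z * ∏ j, (z - w j)) :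
    (k:ℝ) * Real.log (36/29) ≤ 2*A := by
  have hr₀ : (0.85 : ℝ) ≤ r₀ := le_trans (by linarith [sqrt3_ge]) h1
  have hr₀0 : (0:ℝ) < r₀ := by linarith
  set R : ℝ := 9*r₀/5 with hR_def
  have hR0 : 0 < R := by simp only [hR_def]; linarith
  set F : ℂ → ℂ := fun z => h₂ z * ∏ j, (((R:ℝ):ℂ)^2 - (starRingEnd ℂ) (w j) * z) with hF_def
  have hFd : DifferentiableOn ℂ F (ball 0 (2*r₀)) := by
    apply hh₂.mul
    apply DifferentiableOn.fun_finset_prod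
    intro j _
    exact (differentiableOn_const _).sub ((differentiableOn_const _).mul differentiableOn_id)
  have hsphere : ∀ z : ℂ, ‖z‖ = R → ‖F z‖ ≤ Real.exp A * R ^ k := by
    intro z hz
    have hzball : z ∈ ball (0:ℂ) (2*r₀) := by
      rw [mem_ball_zero_iff, hz]; simp only [hR_def]; linarith
    have hkey : ∀ j : Fin k, ‖((R:ℝ):ℂ)^2 - (starRingEnd ℂ) (w j) * z‖ = R * ‖z - w j‖ := by
      intro j
      have hzz : (starRingEnd ℂ) z * z = ((R:ℝ):ℂ)^2 := by
        rw [mul_comm, Complex.mul_conj]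
        have : Complex.normSq z = R^2 := by
          rw [Complex.normSq_eq_norm_sq, hz]
        rw [this]
        push_cast
        try ring
      have : ((R:ℝ):ℂ)^2 - (starRingEnd ℂ) (w j) * z = (starRingEnd ℂ) (z - w j) * z := by
        rw [map_sub, sub_mul, ← hzz]
      rw [this, norm_mul, hz, mul_comm]
      congr 1
      simpa using Complex.norm_conj (z - w j)
    have hFz : ‖F z‖ = ‖f z‖ * R ^ k := by
      rw [hF_def]
      simp only
      rw [norm_mul, norm_prod]
      rw [hfac z hzball, norm_mul, norm_prod]
      have : ∀ j ∈ (univ : Finset (Fin k)), ‖((R:ℝ):ℂ)^2 - (starRingEnd ℂ) (w j) * z‖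
          = R * ‖z - w j‖ := fun j _ => hkey j
      rw [Finset.prod_congr rfl this, Finset.prod_mul_distrib, Finset.prod_const,
        Finset.card_univ, Fintype.card_fin]
      ring
    rw [hFz]
    exact mul_le_mul_of_nonneg_right (hub z hzball) (by positivity)
  have hF0 : ‖F 0‖ ≤ Real.exp A * R ^ k := by
    have := maxmod hR0 (show R < 2*r₀ by simp only [hR_def]; linarith) hFd hsphere 0
      (mem_closedBall_self hR0.le)
    exact this
  have hF0eq : ‖F 0‖ = ‖h₂ 0‖ * (R^2) ^ k := by
    rw [hF_def]
    simp only [mul_zero, sub_zero]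
    rw [norm_mul, norm_prod]
    have : ∀ j ∈ (univ : Finset (Fin k)), ‖(((R:ℝ):ℂ))^2‖ = R^2 := by
      intro j _
      rw [norm_pow, Complex.norm_real, Real.norm_eq_abs, abs_of_pos hR0]
    rw [Finset.prod_congr rfl this, Finset.prod_const, Finset.card_univ, Fintype.card_fin]
  have hRk : (0:ℝ) < R ^ k := by positivity
  have hup : ‖h₂ 0‖ * R ^ k ≤ Real.exp A := by
    have h3 : ‖h₂ 0‖ * (R^2)^k = (‖h₂ 0‖ * R^k) * R^k := by
      rw [← pow_mul, mul_comm 2 k, pow_mul, sq, ← mul_assoc]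
    rw [hF0eq, h3] at hF0
    exact le_of_mul_le_mul_right (by linarith [hF0]) hRk
  have hlow : Real.exp (-A) ≤ ‖h₂ 0‖ * (29*r₀/20) ^ k := by
    have h0ball : (0:ℂ) ∈ ball (0:ℂ) (2*r₀) := mem_ball_self (by linarith)
    have hf0 : ‖f 0‖ = ‖h₂ 0‖ * ∏ j, ‖(0:ℂ) - w j‖ := by
      rw [hfac 0 h0ball, norm_mul, norm_prod]
    have hprod : ∏ j, ‖(0:ℂ) - w j‖ ≤ (29*r₀/20) ^ k := by
      have heach : ∀ j ∈ (univ : Finset (Fin k)), ‖(0:ℂ) - w j‖ ≤ 29*r₀/20 := by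
        intro j _
        rw [zero_sub, norm_neg]
        exact mem_closedBall_zero_iff.mp (hw j)
      calc ∏ j, ‖(0:ℂ) - w j‖ ≤ ∏ _j : Fin k, (29*r₀/20) :=
            Finset.prod_le_prod (fun j _ => norm_nonneg _) heach
        _ = (29*r₀/20) ^ k := by rw [Finset.prod_const, Finset.card_univ, Fintype.card_fin]
    calc Real.exp (-A) ≤ ‖f 0‖ := hlb
      _ = ‖h₂ 0‖ * ∏ j, ‖(0:ℂ) - w j‖ := hf0
      _ ≤ ‖h₂ 0‖ * (29*r₀/20) ^ k := mul_le_mul_of_nonneg_left hprod (norm_nonneg _)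
  -- combine
  have hq0 : (0:ℝ) < (29*r₀/20) ^ k := by positivity
  have hmain : Real.exp (-A) * R ^ k ≤ Real.exp A * (29*r₀/20) ^ k := by
    calc Real.exp (-A) * R ^ k ≤ (‖h₂ 0‖ * (29*r₀/20) ^ k) * R ^ k :=
          mul_le_mul_of_nonneg_right hlow hRk.le
      _ = (‖h₂ 0‖ * R ^ k) * (29*r₀/20) ^ k := by ring
      _ ≤ Real.exp A * (29*r₀/20) ^ k := mul_le_mul_of_nonneg_right hup hq0.le
  have hRq : R ^ k = (36/29:ℝ)^k * (29*r₀/20) ^ k := by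
    rw [← mul_pow]
    congr 1
    simp only [hR_def]; ring
  have hstep : Real.exp (-A) * (36/29:ℝ)^k ≤ Real.exp A := by
    have h4 : (Real.exp (-A) * (36/29:ℝ)^k) * (29*r₀/20) ^ k ≤ Real.exp A * (29*r₀/20) ^ k := by
      calc (Real.exp (-A) * (36/29:ℝ)^k) * (29*r₀/20) ^ k = Real.exp (-A) * R ^ k := by
            rw [hRq]; ring
        _ ≤ Real.exp A * (29*r₀/20) ^ k := hmain
    exact le_of_mul_le_mul_right h4 hq0
  have hfin : (36/29:ℝ)^k ≤ Real.exp (2*A) := by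
    rw [show (2*A : ℝ) = A - (-A) by ring, Real.exp_sub, le_div_iff₀ (Real.exp_pos _)]
    linarith [hstep]
  have hlog := Real.log_le_log (by positivity) hfin
  rwa [Real.log_pow, Real.log_exp] at hlog


lemma bc_alg (u c : ℂ) (hD : c - u ≠ 0) : u * (1 + u/(c - u)) = c * (u/(c - u)) := by
  field_simp
  ring

lemma factor_step {r₀ : ℝ} (hr₀0 : 0 < r₀) {h : ℂ → ℂ}
    (hd : DifferentiableOn ℂ h (ball 0 (2*r₀))) {w₀ : ℂ}
    (hw₀ : w₀ ∈ closedBall (0:ℂ) (29*r₀/20)) (h0 : h w₀ = 0) :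
    DifferentiableOn ℂ (dslope h w₀) (ball 0 (2*r₀)) ∧
      ∀ z : ℂ, h z = (z - w₀) * dslope h w₀ z := by
  have hmem : w₀ ∈ ball (0:ℂ) (2*r₀) := by
    rw [mem_ball_zero_iff]
    have := mem_closedBall_zero_iff.mp hw₀
    linarith
  constructor
  · exact (differentiableOn_dslope (isOpen_ball.mem_nhds hmem)).mpr hd
  · intro z
    have := sub_smul_dslope h w₀ z
    rw [smul_eq_mul, h0, sub_zero] at this
    exact this.symm

lemma facto {r₀ : ℝ} (hr₀0 : 0 < r₀) :
    ∀ (n : ℕ) (h : ℂ → ℂ), DifferentiableOn ℂ h (ball 0 (2*r₀)) →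
    (∀ (k : ℕ) (w : Fin k → ℂ) (h₂ : ℂ → ℂ), DifferentiableOn ℂ h₂ (ball 0 (2*r₀)) →
      (∀ j, w j ∈ closedBall (0:ℂ) (29*r₀/20)) →
      (∀ z ∈ ball (0:ℂ) (2*r₀), h z = h₂ z * ∏ j, (z - w j)) → k ≤ n) →
    ∃ (M : ℕ) (w : Fin M → ℂ) (h₂ : ℂ → ℂ),
      DifferentiableOn ℂ h₂ (ball 0 (2*r₀)) ∧
      (∀ j, w j ∈ closedBall (0:ℂ) (29*r₀/20) ∧ h (w j) = 0) ∧
      (∀ z ∈ ball (0:ℂ) (2*r₀), h z = h₂ z * ∏ j, (z - w j)) ∧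
      (∀ z ∈ closedBall (0:ℂ) (29*r₀/20), h₂ z ≠ 0) := by
  intro n
  induction n with
  | zero =>
    intro h hd hbound
    by_cases hex : ∃ z ∈ closedBall (0:ℂ) (29*r₀/20), h z = 0
    · exfalso
      obtain ⟨w₀, hw₀, h0⟩ := hex
      obtain ⟨hd₁, hid⟩ := factor_step hr₀0 hd hw₀ h0
      have := hbound 1 ![w₀] (dslope h w₀) hd₁
        (by intro j; fin_cases j; simpa using hw₀)
        (by
          intro z hz
          rw [Fin.prod_univ_one]
          simp only [Matrix.cons_val_zero]
          rw [mul_comm]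
          exact hid z)
      omega
    · push_neg at hex
      refine ⟨0, ![], h, hd, fun j => j.elim0, fun z _ => by simp, hex⟩
  | succ n ih =>
    intro h hd hbound
    by_cases hex : ∃ z ∈ closedBall (0:ℂ) (29*r₀/20), h z = 0
    · obtain ⟨w₀, hw₀, h0⟩ := hex
      obtain ⟨hd₁, hid⟩ := factor_step hr₀0 hd hw₀ h0
      have hbound₁ : ∀ (k : ℕ) (w : Fin k → ℂ) (h₂ : ℂ → ℂ),
          DifferentiableOn ℂ h₂ (ball 0 (2*r₀)) →
          (∀ j, w j ∈ closedBall (0:ℂ) (29*r₀/20)) →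
          (∀ z ∈ ball (0:ℂ) (2*r₀), dslope h w₀ z = h₂ z * ∏ j, (z - w j)) → k ≤ n := by
        intro k w h₂ hd₂ hw hfac
        have := hbound (k+1) (Fin.cons w₀ w) h₂ hd₂
          (by
            intro j
            refine Fin.cases ?_ ?_ j
            · simpa using hw₀
            · intro i; simpa using hw i)
          (by
            intro z hz
            rw [Fin.prod_univ_succ]; simp only [Fin.cons_zero, Fin.cons_succ]
            have h1 := hid z
            rw [h1, hfac z hz]
            ring)
        omega
      obtain ⟨M, w, h₂, hd₂, hzeros, hfac, hnz⟩ := ih (dslope h w₀) hd₁ hbound₁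
      refine ⟨M+1, Fin.cons w₀ w, h₂, hd₂, ?_, ?_, hnz⟩
      · intro j
        refine Fin.cases ?_ ?_ j
        · exact ⟨by simpa using hw₀, by simpa using h0⟩
        · intro i
          refine ⟨by simpa using (hzeros i).1, ?_⟩
          have := hid (w i)
          rw [(hzeros i).2, mul_zero] at this
          simpa using this
      · intro z hz
        rw [Fin.prod_univ_succ]; simp only [Fin.cons_zero, Fin.cons_succ]
        rw [hid z, hfac z hz]
        ring
    · push_neg at hex
      refine ⟨0, ![], h, hd, fun j => j.elim0, fun z _ => by simp, hex⟩


set_option maxHeartbeats 2000000 in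
theorem stmt15_aux : ∃ C : ℝ, 0 < C ∧
    ∀ r₀ : ℝ, Real.sqrt 3 / 2 ≤ r₀ → r₀ ≤ 1 →
    ∀ A : ℝ, 1 ≤ A →
    ∀ f : ℂ → ℂ, DifferentiableOn ℂ f (Metric.ball 0 (2 * r₀)) →
      (∀ w ∈ Metric.ball (0 : ℂ) (2 * r₀), ‖f w‖ ≤ Real.exp A) →
      Real.exp (-A) ≤ ‖f 0‖ →
      ∃ (M : ℕ) (w : Fin M → ℂ) (g : ℂ → ℂ),
        (∀ j, w j ∈ Metric.ball (0 : ℂ) (3 * r₀ / 2) ∧ f (w j) = 0) ∧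
        DifferentiableOn ℂ g (Metric.ball 0 (4 * r₀ / 3)) ∧
        (∀ z ∈ Metric.ball (0 : ℂ) (4 * r₀ / 3),
          f z = Complex.exp (g z) * ∏ j, (z - w j)) ∧
        (∀ z ∈ Metric.ball (0 : ℂ) (4 * r₀ / 3), |(g z).re| ≤ C * A) ∧
        (M : ℝ) ≤ C * A := by
  have hL : (0:ℝ) < Real.log (36/29) := Real.log_pos (by norm_num)
  set L : ℝ := Real.log (36/29) with hL_def
  set K : ℝ := 2 / L with hK_def
  have hK : 0 < K := by positivity
  have hlog4 : (1:ℝ) ≤ Real.log 4 := by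
    rw [Real.le_log_iff_exp_le (by norm_num)]
    have := Real.exp_one_lt_d9
    linarith
  have hlog4' : (0:ℝ) < Real.log 4 := by linarith
  refine ⟨241 * (1 + K * Real.log 4), by positivity, ?_⟩
  intro r₀ h1 h2 A hA f hf hub hlb
  set C : ℝ := 241 * (1 + K * Real.log 4) with hC_def
  have hr₀ : (0.85 : ℝ) ≤ r₀ := le_trans (by linarith [sqrt3_ge]) h1
  have hr₀0 : (0:ℝ) < r₀ := by linarith
  -- zero bound hypothesis for the induction
  have hbound : ∀ (k : ℕ) (w : Fin k → ℂ) (h₂ : ℂ → ℂ),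
      DifferentiableOn ℂ h₂ (ball 0 (2*r₀)) →
      (∀ j, w j ∈ closedBall (0:ℂ) (29*r₀/20)) →
      (∀ z ∈ ball (0:ℂ) (2*r₀), f z = h₂ z * ∏ j, (z - w j)) → k ≤ ⌊2*A/L⌋₊ := by
    intro k w h₂ hd₂ hw hfac
    have hk := zero_bound h1 h2 hub hlb hd₂ hw hfac
    apply Nat.le_floor
    rw [le_div_iff₀ hL]
    exact hk
  obtain ⟨M, w, h₂, hd₂, hzeros, hfac, hnz⟩ := facto hr₀0 (⌊2*A/L⌋₊) f hf hbound
  have hM : (M:ℝ) ≤ K * A := by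
    have hk := zero_bound h1 h2 hub hlb hd₂ (fun j => (hzeros j).1) hfac
    rw [hK_def]
    rw [div_mul_eq_mul_div, le_div_iff₀ hL]
    linarith [hk]
  have hMln : (0:ℝ) ≤ M := Nat.cast_nonneg M
  -- upper bound for h₂ on closedBall (9r₀/5)
  have hupper : ∀ z ∈ closedBall (0:ℂ) (9*r₀/5), ‖h₂ z‖ ≤ Real.exp A * 4^M := by
    apply maxmod (by linarith : (0:ℝ) < 9*r₀/5) (by linarith : 9*r₀/5 < 2*r₀) hd₂
    intro z hz
    have hzball : z ∈ ball (0:ℂ) (2*r₀) := by rw [mem_ball_zero_iff, hz]; linarith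
    have hprodlb : ((1:ℝ)/4)^M ≤ ∏ j, ‖z - w j‖ := by
      have heach : ∀ j ∈ (univ : Finset (Fin M)), (1:ℝ)/4 ≤ ‖z - w j‖ := by
        intro j _
        have h3 := norm_sub_norm_le z (w j)
        have h4 : ‖w j‖ ≤ 29*r₀/20 := mem_closedBall_zero_iff.mp (hzeros j).1
        rw [hz] at h3
        linarith
      calc ((1:ℝ)/4)^M = ∏ _j : Fin M, ((1:ℝ)/4) := by
            rw [Finset.prod_const, Finset.card_univ, Fintype.card_fin]
        _ ≤ ∏ j, ‖z - w j‖ := Finset.prod_le_prod (fun _ _ => by norm_num) heach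
    have hfz : ‖h₂ z‖ * ∏ j, ‖z - w j‖ ≤ Real.exp A := by
      rw [← norm_prod, ← norm_mul, ← hfac z hzball]
      exact hub z hzball
    have h5 : ‖h₂ z‖ * ((1:ℝ)/4)^M ≤ Real.exp A :=
      le_trans (mul_le_mul_of_nonneg_left hprodlb (norm_nonneg _)) hfz
    have h6 : ((1:ℝ)/4)^M = ((4:ℝ)^M)⁻¹ := by rw [one_div, inv_pow]
    rw [h6, ← div_eq_mul_inv, div_le_iff₀ (by positivity : (0:ℝ) < 4^M)] at h5
    linarith [h5]
  -- lower bound at 0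
  have hpos0 : (0:ℝ) < ‖h₂ 0‖ :=
    norm_pos_iff.mpr (hnz 0 (mem_closedBall_self (by linarith)))
  have hlow0 : Real.exp (-A) ≤ ‖h₂ 0‖ * 2^M := by
    have h0ball : (0:ℂ) ∈ ball (0:ℂ) (2*r₀) := mem_ball_self (by linarith)
    have hf0 : ‖f 0‖ = ‖h₂ 0‖ * ∏ j, ‖(0:ℂ) - w j‖ := by
      rw [hfac 0 h0ball, norm_mul, norm_prod]
    have hprod : ∏ j, ‖(0:ℂ) - w j‖ ≤ (2:ℝ) ^ M := by
      have heach : ∀ j ∈ (univ : Finset (Fin M)), ‖(0:ℂ) - w j‖ ≤ (2:ℝ) := by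
        intro j _
        rw [zero_sub, norm_neg]
        have := mem_closedBall_zero_iff.mp (hzeros j).1
        linarith
      calc ∏ j, ‖(0:ℂ) - w j‖ ≤ ∏ _j : Fin M, (2:ℝ) :=
            Finset.prod_le_prod (fun _ _ => norm_nonneg _) heach
        _ = (2:ℝ)^M := by rw [Finset.prod_const, Finset.card_univ, Fintype.card_fin]
    calc Real.exp (-A) ≤ ‖f 0‖ := hlb
      _ = ‖h₂ 0‖ * ∏ j, ‖(0:ℂ) - w j‖ := hf0
      _ ≤ ‖h₂ 0‖ * 2^M := mul_le_mul_of_nonneg_left hprod (norm_nonneg _)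
  -- the logarithm
  obtain ⟨g, hgd, hgexp⟩ := exists_log_ball (h := h₂) (ρ := 137*r₀/100) (σ := 7*r₀/5)
    (by linarith) (by linarith)
    (hd₂.mono (ball_subset_ball (by linarith)))
    (fun z hz => hnz z (mem_closedBall_zero_iff.mpr
      (le_of_lt (lt_of_lt_of_le (mem_ball_zero_iff.mp hz) (by linarith)))))
  have hre : ∀ z ∈ ball (0:ℂ) (137*r₀/100), (g z).re = Real.log ‖h₂ z‖ := by
    intro z hz
    rw [← hgexp z hz, Complex.norm_exp, Real.log_exp]
  set B₀ : ℝ := A + M * Real.log 4 with hB₀_def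
  have hB₀1 : 1 ≤ B₀ := by nlinarith
  have hreUp : ∀ z ∈ ball (0:ℂ) (137*r₀/100), (g z).re ≤ B₀ := by
    intro z hz
    rw [hre z hz]
    have hzc : z ∈ closedBall (0:ℂ) (9*r₀/5) := by
      rw [mem_closedBall_zero_iff]
      have := mem_ball_zero_iff.mp hz
      linarith
    have hzc' : z ∈ closedBall (0:ℂ) (29*r₀/20) := by
      rw [mem_closedBall_zero_iff]
      have := mem_ball_zero_iff.mp hz
      linarith
    have hposz : (0:ℝ) < ‖h₂ z‖ := norm_pos_iff.mpr (hnz z hzc')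
    have := Real.log_le_log hposz (hupper z hzc)
    rwa [Real.log_mul (Real.exp_ne_zero A) (by positivity), Real.log_exp,
      Real.log_pow] at this
  have h0mem : (0:ℂ) ∈ ball (0:ℂ) (137*r₀/100) := mem_ball_self (by linarith)
  have hre0Up : (g 0).re ≤ B₀ := hreUp 0 h0mem
  have hre0Low : -B₀ ≤ (g 0).re := by
    rw [hre 0 h0mem]
    have h7 := Real.log_le_log (Real.exp_pos _) hlow0
    rw [Real.log_exp, Real.log_mul (ne_of_gt hpos0) (by positivity), Real.log_pow] at h7
    have hlog2 : Real.log 2 ≤ Real.log 4 := Real.log_le_log (by norm_num) (by norm_num)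
    have : (M:ℝ) * Real.log 2 ≤ (M:ℝ) * Real.log 4 :=
      mul_le_mul_of_nonneg_left hlog2 hMln
    simp only [hB₀_def]
    linarith
  -- Borel–Carathéodory via Schwarz
  set B : ℝ := 2*B₀ + 1 with hB_def
  have hB3 : 3 ≤ B := by simp only [hB_def]; linarith
  set φ : ℂ → ℂ := fun z => (g z - g 0) / (((2*B : ℝ):ℂ) - (g z - g 0)) with hφ_def
  have hden : ∀ z ∈ ball (0:ℂ) (137*r₀/100), (((2*B : ℝ):ℂ) - (g z - g 0)) ≠ 0 := by
    intro z hz hcon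
    have h8 := congrArg Complex.re hcon
    simp only [Complex.sub_re, Complex.ofReal_re, Complex.zero_re] at h8
    have h9 := hreUp z hz
    simp only [hB_def] at h8
    linarith
  have hφd : DifferentiableOn ℂ φ (ball 0 (137*r₀/100)) := by
    apply DifferentiableOn.div
    · exact hgd.sub (differentiableOn_const _)
    · exact (differentiableOn_const _).sub (hgd.sub (differentiableOn_const _))
    · exact hden
  have hφ0 : φ 0 = 0 := by simp [hφ_def]
  have hmaps : Set.MapsTo φ (ball 0 (137*r₀/100)) (ball (φ 0) 1) := by
    intro z hz
    rw [hφ0, mem_ball_zero_iff]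
    have hure : (g z - g 0).re ≤ 2*B₀ := by
      rw [Complex.sub_re]
      linarith [hreUp z hz, hre0Low]
    have hlt : ‖g z - g 0‖ < ‖((2*B : ℝ):ℂ) - (g z - g 0)‖ := by
      apply lt_of_pow_lt_pow_left₀ 2 (norm_nonneg _)
      rw [Complex.sq_norm, Complex.sq_norm]
      simp only [Complex.normSq_apply, Complex.sub_re, Complex.sub_im,
        Complex.ofReal_re, Complex.ofReal_im]
      rw [Complex.sub_re] at hure
      simp only [hB_def] at hure ⊢
      nlinarith [hure, hB₀1,
        mul_pos (show (0:ℝ) < 2*(2*B₀+1) by linarith)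
          (show (0:ℝ) < 2*(2*B₀+1) - 2*((g z).re - (g 0).re) by linarith)]
    rw [hφ_def]
    simp only
    rw [norm_div]
    exact (div_lt_one (lt_of_le_of_lt (norm_nonneg _) hlt)).mpr hlt
  -- conclusion
  refine ⟨M, w, g, ?_, hgd.mono (ball_subset_ball (by linarith)), ?_, ?_, ?_⟩
  · intro j
    refine ⟨?_, (hzeros j).2⟩
    rw [mem_ball_zero_iff]
    have := mem_closedBall_zero_iff.mp (hzeros j).1
    linarith
  · intro z hz
    have hz1 : z ∈ ball (0:ℂ) (137*r₀/100) := by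
      rw [mem_ball_zero_iff]
      have := mem_ball_zero_iff.mp hz
      linarith
    have hz2 : z ∈ ball (0:ℂ) (2*r₀) := by
      rw [mem_ball_zero_iff]
      have := mem_ball_zero_iff.mp hz
      linarith
    rw [hfac z hz2, hgexp z hz1]
  · intro z hz
    have hz1 : z ∈ ball (0:ℂ) (137*r₀/100) := by
      rw [mem_ball_zero_iff]
      have := mem_ball_zero_iff.mp hz
      linarith
    -- Schwarz estimate
    have hsch := Complex.dist_le_div_mul_dist_of_mapsTo_ball hφd (hmaps.mono_right ball_subset_closedBall) hz1
    rw [hφ0, dist_zero_right, dist_zero_right] at hsch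
    have hφb : ‖φ z‖ ≤ 400/411 := by
      have h10 : ‖z‖ ≤ 4*r₀/3 := le_of_lt (mem_ball_zero_iff.mp hz)
      have h11 : 1/(137*r₀/100) * ‖z‖ ≤ 1/(137*r₀/100) * (4*r₀/3) := by
        apply mul_le_mul_of_nonneg_left h10 (by positivity)
      have h12 : 1/(137*r₀/100) * (4*r₀/3) = 400/411 := by
        field_simp
        ring
      linarith [hsch, h11]
    have heq : (g z - g 0) * (1 + φ z) = ((2*B : ℝ):ℂ) * φ z :=
      bc_alg (g z - g 0) ((2*B : ℝ):ℂ) (hden z hz1)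
    have hnorm : ‖g z - g 0‖ * ‖1 + φ z‖ = 2*B * ‖φ z‖ := by
      rw [← norm_mul, heq, norm_mul, Complex.norm_real, Real.norm_eq_abs,
        abs_of_pos (by linarith : (0:ℝ) < 2*B)]
    have h1φ : (11:ℝ)/411 ≤ ‖1 + φ z‖ := by
      have h13 : ‖(1:ℂ)‖ - ‖-(φ z)‖ ≤ ‖1 - (-(φ z))‖ := norm_sub_norm_le _ _
      rw [sub_neg_eq_add, norm_neg, norm_one] at h13
      linarith [hφb]
    have huB : ‖g z - g 0‖ ≤ 80*B := by
      have h14 : ‖g z - g 0‖ * (11/411) ≤ 2*B * (400/411) := by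
        calc ‖g z - g 0‖ * (11/411) ≤ ‖g z - g 0‖ * ‖1 + φ z‖ :=
              mul_le_mul_of_nonneg_left h1φ (norm_nonneg _)
          _ = 2*B * ‖φ z‖ := hnorm
          _ ≤ 2*B * (400/411) := mul_le_mul_of_nonneg_left hφb (by linarith)
      linarith [h14, hB3]
    have hrediff : |(g z).re - (g 0).re| ≤ ‖g z - g 0‖ := by
      have := Complex.abs_re_le_norm (g z - g 0)
      rw [Complex.sub_re] at this
      exact this
    have hre0abs : |(g 0).re| ≤ B₀ := abs_le.mpr ⟨hre0Low, hre0Up⟩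
    have hgzre : |(g z).re| ≤ 241*B₀ := by
      have h15 : |(g z).re| ≤ |(g z).re - (g 0).re| + |(g 0).re| := by
        calc |(g z).re| = |((g z).re - (g 0).re) + (g 0).re| := by congr 1; ring
          _ ≤ |(g z).re - (g 0).re| + |(g 0).re| := abs_add_le _ _
      simp only [hB_def] at huB
      linarith [h15, hrediff, hre0abs, huB, hB₀1]
    calc |(g z).re| ≤ 241*B₀ := hgzre
      _ ≤ C * A := by
        have hmono := mul_le_mul_of_nonneg_right hM (le_of_lt hlog4')
        simp only [hB₀_def, hC_def]
        nlinarith [hmono, hA]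
  · calc (M:ℝ) ≤ K*A := hM
      _ ≤ C * A := by
        have h16 : K ≤ 241*(K*Real.log 4) := by nlinarith [hlog4, hK]
        have h17 := mul_le_mul_of_nonneg_right h16 (show (0:ℝ) ≤ A by linarith)
        simp only [hC_def]
        nlinarith [h17, hA]


/-- factorization `f = e^g ∏ (w - w_j)` of a holomorphic function on
`D(0, 2r₀)` with `|f| ≤ e^A` and `|f(0)| ≥ e^{-A}`, where the `w_j` are zeros of `f`
in `D(0, 3r₀/2)`, `|Re g| ≤ C·A` on `D(0, 4r₀/3)` and `M ≤ C·A`, with `C` depending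
only on `r₀ ∈ [√3/2, 1]` (hence a universal constant). -/
theorem stmt15 : ∃ C : ℝ, 0 < C ∧
    ∀ r₀ : ℝ, Real.sqrt 3 / 2 ≤ r₀ → r₀ ≤ 1 →
    ∀ A : ℝ, 1 ≤ A →
    ∀ f : ℂ → ℂ, DifferentiableOn ℂ f (Metric.ball 0 (2 * r₀)) →
      (∀ w ∈ Metric.ball (0 : ℂ) (2 * r₀), ‖f w‖ ≤ Real.exp A) →
      Real.exp (-A) ≤ ‖f 0‖ →
      ∃ (M : ℕ) (w : Fin M → ℂ) (g : ℂ → ℂ),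
        (∀ j, w j ∈ Metric.ball (0 : ℂ) (3 * r₀ / 2) ∧ f (w j) = 0) ∧
        DifferentiableOn ℂ g (Metric.ball 0 (4 * r₀ / 3)) ∧
        (∀ z ∈ Metric.ball (0 : ℂ) (4 * r₀ / 3),
          f z = Complex.exp (g z) * ∏ j, (z - w j)) ∧
        (∀ z ∈ Metric.ball (0 : ℂ) (4 * r₀ / 3), |(g z).re| ≤ C * A) ∧
        (M : ℝ) ≤ C * A := by
  exact stmt15_aux
end

section
/- Let f be holomorphic on a neighborhood of the closed disc of radius r₀ ∈ [√3/2,1], with M zeros w₁,…,w_M (counted with multiplicity, |w_j| = r_j) in D(0, 3r₀/2), and suppose that whenever |f(w)| < ε for some |w| = r < r₀ then ∏_{j=1}^M |r − r_j| ≤ ε e^{B} for a constant B ≥ 0. Then the Lebesgue measure of the set Ω(ε) = { r ∈ [0, r₀) : ∃ w, |w| = r, |f(w)| < ε } is at most 2M (ε e^{B})^{1/M}, provided ε e^{B} ≤ 1. -/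
open MeasureTheory

/-- if whenever `|f(w)| < ε` on `|w| = r < r₀` one has
`∏_j |r − r_j| ≤ ε e^B` (with `r_j = |w_j|`, `w_j` the zeros of `f` in
`D(0, 3r₀/2)`), then the set `Ω(ε) = {r ∈ [0, r₀) : ∃ w, |w| = r, |f(w)| < ε}`
has Lebesgue measure at most `2M (ε e^B)^{1/M}`, provided `ε e^B ≤ 1`. -/
theorem stmt16 (M : ℕ) (hM : 1 ≤ M) (r₀ : ℝ)
    (hr₀ : Real.sqrt 3 / 2 ≤ r₀) (hr₀' : r₀ ≤ 1)
    (f : ℂ → ℂ) (hf : DifferentiableOn ℂ f (Metric.ball 0 (2 * r₀)))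
    (w : Fin M → ℂ) (hw : ∀ j, w j ∈ Metric.ball (0 : ℂ) (3 * r₀ / 2) ∧ f (w j) = 0)
    (r : Fin M → ℝ) (hr : ∀ j, r j = ‖w j‖)
    (ε B : ℝ) (hε : 0 < ε) (hB : 0 ≤ B) (hsmall : ε * Real.exp B ≤ 1)
    (hyp : ∀ z : ℂ, ‖z‖ < r₀ → ‖f z‖ < ε → ∏ j, |‖z‖ - r j| ≤ ε * Real.exp B) :
    volume {x : ℝ | x ∈ Set.Ico 0 r₀ ∧ ∃ z : ℂ, ‖z‖ = x ∧ ‖f z‖ < ε}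
      ≤ ENNReal.ofReal (2 * M * (ε * Real.exp B) ^ ((1 : ℝ) / M)) := by
  set A := ε * Real.exp B with hA
  have hA0 : 0 < A := by positivity
  set δ := A ^ ((1 : ℝ) / M) with hδ
  have hδ0 : 0 < δ := Real.rpow_pos_of_pos hA0 _
  have hM0 : (M : ℝ) ≠ 0 := by positivity
  have hδM : δ ^ M = A := by
    rw [hδ, ← Real.rpow_natCast (A ^ ((1 : ℝ) / M)) M, ← Real.rpow_mul hA0.le,
      one_div, inv_mul_cancel₀ hM0, Real.rpow_one]
  have hsub : {x : ℝ | x ∈ Set.Ico 0 r₀ ∧ ∃ z : ℂ, ‖z‖ = x ∧ ‖f z‖ < ε}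
      ⊆ ⋃ j, Metric.closedBall (r j) δ := by
    rintro x ⟨⟨hx0, hxr⟩, z, hz, hfz⟩
    by_contra hc
    simp only [Set.mem_iUnion, Metric.mem_closedBall, Real.dist_eq, not_exists,
      not_le] at hc
    have hle : ∏ j, |x - r j| ≤ A := by
      have := hyp z (hz ▸ hxr) hfz
      rwa [hz] at this
    have hlt : δ ^ M < ∏ j, |x - r j| := by
      have : ∏ _j : Fin M, δ < ∏ j, |x - r j| := by
        refine Finset.prod_lt_prod_of_nonempty (fun j _ => hδ0) (fun j _ => hc j) ?_
        exact Finset.univ_nonempty_iff.2 ⟨⟨0, hM⟩⟩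
      simpa using this
    rw [hδM] at hlt
    linarith
  calc volume {x : ℝ | x ∈ Set.Ico 0 r₀ ∧ ∃ z : ℂ, ‖z‖ = x ∧ ‖f z‖ < ε}
      ≤ volume (⋃ j, Metric.closedBall (r j) δ) := measure_mono hsub
    _ ≤ ∑ j, volume (Metric.closedBall (r j) δ) := measure_iUnion_fintype_le _ _
    _ = ∑ _j : Fin M, ENNReal.ofReal (2 * δ) := by
        simp [Real.volume_closedBall, two_mul]
    _ = M * ENNReal.ofReal (2 * δ) := by
        simp [Finset.sum_const, nsmul_eq_mul]
    _ = ENNReal.ofReal (2 * M * δ) := by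
        rw [show (2 : ℝ) * M * δ = M * (2 * δ) by ring, ENNReal.ofReal_mul (by positivity),
          ENNReal.ofReal_mul (by norm_num), ENNReal.ofReal_natCast, ENNReal.ofReal_ofNat,
          ENNReal.ofReal_mul (by norm_num : (0:ℝ) ≤ 2), ENNReal.ofReal_ofNat]
    _ = ENNReal.ofReal (2 * M * A ^ ((1 : ℝ) / M)) := rfl
end

section
/- Let μ(dr) = Ĉ e^{φ(r)} r^{2D−1} dr be a probability measure on [0, r₀] with |φ'(r)| ≤ K for all r, D ≥ 1, and set r̃₀ = min(1, D/K)/C₀ for a sufficiently large constant C₀ (assume 2r̃₀ ≤ r₀). Define μ̃(dr) = Ĉ e^{φ(max(r, r̃₀))} max(r, r̃₀)^{2D−1} dr. Then μ ≤ μ̃ pointwise and μ̃([0, r₀]) ≤ C for a constant C depending only on C₀ (in particular μ̃([0, r̃₀]) ≤ μ([r̃₀, 2r̃₀]) ≤ 1). -/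
open MeasureTheory
open scoped ENNReal

private lemma stmt18_key (K : ℝ) (n : ℕ) (φ φ' : ℝ → ℝ)
    (hd : ∀ x, HasDerivAt φ (φ' x) x) (hK' : ∀ x, |φ' x| ≤ K)
    {x y : ℝ} (hx : 0 < x) (hxy : x ≤ y) (hKy : K * y ≤ (n : ℝ)) :
    Real.exp (φ x) * x ^ n ≤ Real.exp (φ y) * y ^ n := by
  have hy : 0 < y := hx.trans_le hxy
  have hmvt : ‖φ y - φ x‖ ≤ K * ‖y - x‖ :=
    Convex.norm_image_sub_le_of_norm_hasDerivWithin_le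
      (fun z _ => (hd z).hasDerivWithinAt) (fun z _ => by simpa using hK' z)
      convex_univ (Set.mem_univ x) (Set.mem_univ y)
  have habs : |y - x| = y - x := abs_of_nonneg (by linarith)
  have h1 : φ x - φ y ≤ K * (y - x) := by
    rw [Real.norm_eq_abs, Real.norm_eq_abs, habs] at hmvt
    have := neg_abs_le (φ y - φ x)
    linarith
  have hlog1 : Real.log (x / y) ≤ x / y - 1 :=
    Real.log_le_sub_one_of_pos (div_pos hx hy)
  have hlogdiv : Real.log (x / y) = Real.log x - Real.log y :=
    Real.log_div hx.ne' hy.ne'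
  have hlog : (y - x) / y ≤ Real.log y - Real.log x := by
    rw [hlogdiv] at hlog1
    have : x / y - 1 = -((y - x) / y) := by field_simp; ring
    rw [this] at hlog1
    linarith
  have hchain : φ x + n * Real.log x ≤ φ y + n * Real.log y := by
    have h2 : K * (y - x) = (K * y) * ((y - x) / y) := by field_simp
    have h3 : (K * y) * ((y - x) / y) ≤ (n : ℝ) * ((y - x) / y) :=
      mul_le_mul_of_nonneg_right hKy (div_nonneg (by linarith) hy.le)
    have h4 : (n : ℝ) * ((y - x) / y) ≤ (n : ℝ) * (Real.log y - Real.log x) :=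
      mul_le_mul_of_nonneg_left hlog (Nat.cast_nonneg n)
    nlinarith
  have ex : Real.exp (φ x) * x ^ n = Real.exp (φ x + n * Real.log x) := by
    rw [Real.exp_add, Real.exp_nat_mul, Real.exp_log hx]
  have ey : Real.exp (φ y) * y ^ n = Real.exp (φ y + n * Real.log y) := by
    rw [Real.exp_add, Real.exp_nat_mul, Real.exp_log hy]
  rw [ex, ey]
  exact Real.exp_le_exp.mpr hchain

/-- for a probability measure `μ(dr) = Ĉ e^{φ(r)} r^{2D−1} dr` on
`[0, r₀]` with `|φ'| ≤ K`, setting `r̃₀ = min(1, D/K)/C₀` for a sufficiently large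
constant `C₀` (with `2r̃₀ ≤ r₀`) and
`μ̃(dr) = Ĉ e^{φ(max(r,r̃₀))} max(r,r̃₀)^{2D−1} dr`, one has `μ ≤ μ̃`,
`μ̃([0,r̃₀]) ≤ μ([r̃₀,2r̃₀]) ≤ 1`, and `μ̃` has total mass at most a constant `C`
depending only on `C₀`. -/
theorem stmt18 :
    ∃ C₀ : ℝ, 1 ≤ C₀ ∧ ∃ C : ℝ, 0 < C ∧
    ∀ (r₀ K Chat : ℝ) (D : ℕ) (φ φ' : ℝ → ℝ),
      0 < K → 1 ≤ D → 0 < Chat →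
      (∀ x, HasDerivAt φ (φ' x) x) → (∀ x, |φ' x| ≤ K) →
      ∀ rt₀ : ℝ, rt₀ = min 1 ((D : ℝ) / K) / C₀ →
      2 * rt₀ ≤ r₀ →
      ∀ μ μt : Measure ℝ,
        μ = (volume.restrict (Set.Icc 0 r₀)).withDensity
              (fun x => ENNReal.ofReal (Chat * Real.exp (φ x) * x ^ (2 * D - 1))) →
        μt = (volume.restrict (Set.Icc 0 r₀)).withDensity
              (fun x => ENNReal.ofReal
                (Chat * Real.exp (φ (max x rt₀)) * (max x rt₀) ^ (2 * D - 1))) →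
        μ Set.univ = 1 →
        μ ≤ μt ∧ μt (Set.Icc 0 rt₀) ≤ μ (Set.Icc rt₀ (2 * rt₀)) ∧
          μ (Set.Icc rt₀ (2 * rt₀)) ≤ 1 ∧ μt Set.univ ≤ ENNReal.ofReal C := by
  refine ⟨2, by norm_num, 2, by norm_num, ?_⟩
  intro r₀ K Chat D φ φ' hK hD hChat hd hK' rt₀ hrt h2r μ μt hμ hμt hμ1
  set n := 2 * D - 1 with hn
  have hD0 : (0 : ℝ) < (D : ℝ) := by exact_mod_cast Nat.lt_of_lt_of_le Nat.zero_lt_one hD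
  have hDn : (D : ℝ) ≤ (n : ℝ) := by
    have : D ≤ n := by omega
    exact_mod_cast this
  have hmin0 : 0 < min 1 ((D : ℝ) / K) := lt_min one_pos (div_pos hD0 hK)
  have hrt0 : 0 < rt₀ := by rw [hrt]; positivity
  have hrtr : rt₀ ≤ r₀ := by linarith
  have hKrt2 : K * (2 * rt₀) ≤ (n : ℝ) := by
    have h1 : K * min 1 ((D : ℝ) / K) ≤ K * ((D : ℝ) / K) :=
      mul_le_mul_of_nonneg_left (min_le_right _ _) hK.le
    have h2 : K * ((D : ℝ) / K) = (D : ℝ) := by field_simp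
    have h3 : K * (2 * rt₀) = K * min 1 ((D : ℝ) / K) := by rw [hrt]; ring
    linarith
  have hKrt1 : K * rt₀ ≤ (n : ℝ) := by nlinarith
  -- densities
  set f : ℝ → ℝ≥0∞ := fun x => ENNReal.ofReal (Chat * Real.exp (φ x) * x ^ n) with hf
  set ft : ℝ → ℝ≥0∞ := fun x =>
    ENNReal.ofReal (Chat * Real.exp (φ (max x rt₀)) * (max x rt₀) ^ n) with hft
  have hφd : Differentiable ℝ φ := fun x => (hd x).differentiableAt
  have hφc : Continuous φ := hφd.continuous
  have hfm : Measurable f := by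
    apply Measurable.ennreal_ofReal
    exact ((continuous_const.mul (Real.continuous_exp.comp hφc)).mul (continuous_pow n)).measurable
  have hodd : Odd n := ⟨D - 1, by omega⟩
  -- pointwise density comparison
  have hpt : ∀ x, f x ≤ ft x := by
    intro x
    simp only [hf, hft]
    rcases le_or_gt rt₀ x with h | h
    · rw [max_eq_left h]
    · rw [max_eq_right h.le]
      rcases le_or_gt x 0 with hx0 | hx0
      · have hxn : x ^ n ≤ 0 := hodd.pow_nonpos hx0
        have hle0 : Chat * Real.exp (φ x) * x ^ n ≤ 0 :=
          mul_nonpos_of_nonneg_of_nonpos (by positivity) hxn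
        rw [ENNReal.ofReal_eq_zero.mpr hle0]
        exact zero_le
      · apply ENNReal.ofReal_le_ofReal
        have hkey := stmt18_key K n φ φ' hd hK' hx0 h.le hKrt1
        calc Chat * Real.exp (φ x) * x ^ n = Chat * (Real.exp (φ x) * x ^ n) := by ring
          _ ≤ Chat * (Real.exp (φ rt₀) * rt₀ ^ n) :=
              mul_le_mul_of_nonneg_left hkey hChat.le
          _ = Chat * Real.exp (φ rt₀) * rt₀ ^ n := by ring
  have hle : μ ≤ μt := by
    rw [hμ, hμt]
    exact withDensity_mono (Filter.Eventually.of_forall hpt)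
  -- constant value of the density of μt on [0, rt₀]
  set c : ℝ := Chat * Real.exp (φ rt₀) * rt₀ ^ n with hc
  have hμt_Icc : μt (Set.Icc 0 rt₀) = ENNReal.ofReal c * ENNReal.ofReal rt₀ := by
    rw [hμt, withDensity_apply _ measurableSet_Icc,
      Measure.restrict_restrict measurableSet_Icc,
      Set.inter_eq_left.mpr (Set.Icc_subset_Icc_right hrtr)]
    rw [setLIntegral_congr_fun measurableSet_Icc
      (g := fun _ => ENNReal.ofReal c)
      (fun x hx => by simp only [hft]; rw [max_eq_right hx.2])]
    rw [setLIntegral_const, Real.volume_Icc, sub_zero]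
  have hμ_ge : ENNReal.ofReal c * ENNReal.ofReal rt₀ ≤ μ (Set.Icc rt₀ (2 * rt₀)) := by
    rw [hμ, withDensity_apply _ measurableSet_Icc,
      Measure.restrict_restrict measurableSet_Icc,
      Set.inter_eq_left.mpr (Set.Icc_subset_Icc hrt0.le h2r)]
    have : ENNReal.ofReal c * ENNReal.ofReal rt₀
        = ∫⁻ _ in Set.Icc rt₀ (2 * rt₀), ENNReal.ofReal c := by
      rw [setLIntegral_const, Real.volume_Icc, show 2 * rt₀ - rt₀ = rt₀ by ring]
    rw [this]
    refine setLIntegral_mono hfm (fun x hx => ?_)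
    apply ENNReal.ofReal_le_ofReal
    have hKx : K * x ≤ (n : ℝ) :=
      le_trans (mul_le_mul_of_nonneg_left hx.2 hK.le) hKrt2
    have hkey := stmt18_key K n φ φ' hd hK' hrt0 hx.1 hKx
    calc c = Chat * (Real.exp (φ rt₀) * rt₀ ^ n) := by rw [hc]; ring
      _ ≤ Chat * (Real.exp (φ x) * x ^ n) := mul_le_mul_of_nonneg_left hkey hChat.le
      _ = Chat * Real.exp (φ x) * x ^ n := by ring
  have h2 : μt (Set.Icc 0 rt₀) ≤ μ (Set.Icc rt₀ (2 * rt₀)) := hμt_Icc ▸ hμ_ge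
  have hμle1 : ∀ s : Set ℝ, μ s ≤ 1 := fun s => hμ1 ▸ measure_mono (Set.subset_univ s)
  refine ⟨hle, h2, hμle1 _, ?_⟩
  -- total mass of μt
  have huniv : μt Set.univ = ∫⁻ x in Set.Icc 0 r₀, ft x ∂volume := by
    rw [hμt, withDensity_apply _ MeasurableSet.univ, Measure.restrict_univ]
  have hsplit : Set.Icc (0:ℝ) r₀ = Set.Icc 0 rt₀ ∪ Set.Ioc rt₀ r₀ :=
    (Set.Icc_union_Ioc_eq_Icc hrt0.le hrtr).symm
  have hdisj : Disjoint (Set.Icc (0:ℝ) rt₀) (Set.Ioc rt₀ r₀) :=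
    Set.disjoint_left.mpr (fun x hx hx' => absurd hx.2 (not_le.mpr hx'.1))
  have hpart1 : ∫⁻ x in Set.Icc (0:ℝ) rt₀, ft x ∂volume ≤ 1 := by
    have : ∫⁻ x in Set.Icc (0:ℝ) rt₀, ft x ∂volume ≤ μt (Set.Icc 0 rt₀) := by
      rw [hμt, withDensity_apply _ measurableSet_Icc,
        Measure.restrict_restrict measurableSet_Icc,
        Set.inter_eq_left.mpr (Set.Icc_subset_Icc_right hrtr)]
    exact this.trans (h2.trans (hμle1 _))
  have hpart2 : ∫⁻ x in Set.Ioc rt₀ r₀, ft x ∂volume ≤ 1 := by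
    have hss : Set.Ioc rt₀ r₀ ⊆ Set.Icc 0 r₀ :=
      fun x hx => ⟨(hrt0.trans hx.1).le, hx.2⟩
    have heq : ∫⁻ x in Set.Ioc rt₀ r₀, ft x ∂volume
        = ∫⁻ x in Set.Ioc rt₀ r₀, f x ∂volume := by
      refine setLIntegral_congr_fun measurableSet_Ioc
        (fun x hx => ?_)
      simp only [hf, hft, max_eq_left hx.1.le]
    have hμIoc : μ (Set.Ioc rt₀ r₀) = ∫⁻ x in Set.Ioc rt₀ r₀, f x ∂volume := by
      rw [hμ, withDensity_apply _ measurableSet_Ioc,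
        Measure.restrict_restrict measurableSet_Ioc, Set.inter_eq_left.mpr hss]
    rw [heq, ← hμIoc]
    exact hμle1 _
  calc μt Set.univ = ∫⁻ x in Set.Icc 0 r₀, ft x ∂volume := huniv
    _ = (∫⁻ x in Set.Icc (0:ℝ) rt₀, ft x ∂volume)
        + ∫⁻ x in Set.Ioc rt₀ r₀, ft x ∂volume := by
        rw [hsplit, lintegral_union measurableSet_Ioc hdisj]
    _ ≤ 1 + 1 := add_le_add hpart1 hpart2
    _ = ENNReal.ofReal 2 := by
        rw [ENNReal.ofReal_ofNat]; norm_num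
end
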